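/- arXiv:1004.2752 — 6 statements merged into one kernel-verified Lean document; each statement's English description precedes it below -/
import Mathlib

section
/- Lemma 3.2 (abstract form, with exactly the hypotheses used in its proof): Let (Ω, F, P) be a probability space. For every integer ℓ ≥ 1 let A_ℓ, B_ℓ, C_ℓ be sub-σ-algebras of F such that the triple (A_ℓ, B_ℓ, C_ℓ) is independent under P, the family (A_ℓ)_{ℓ≥1} is nondecreasing, the family (H_ℓ)_{ℓ≥1} with H_ℓ := B_ℓ ∨ C_ℓ is nonincreasing, every event in ⋂_{ℓ≥1} H_ℓ has probability 0 or 1, and σ(⋃_{m≥1} A_m) ⊆ A_ℓ ∨ B_ℓ ∨ C_ℓ for every ℓ. For every ℓ let τ_ℓ : Ω → Ω be measurable and measure preserving (P ∘ τ_ℓ⁻¹ = P) such that: f ∘ τ_ℓ is B_ℓ-measurable for every bounded A_ℓ-measurable f : Ω → ℝ; f ∘ τ_ℓ is A_ℓ-measurable for every bounded B_ℓ-measurable f; and f ∘ τ_ℓ = f P-a.s. for every bounded C_ℓ-measurable f. If ζ is a bounded random variable measurable with respect to σ(⋃_{m≥1} A_m) and ζ ∘ τ_ℓ = ζ P-a.s.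 for every ℓ ≥ 1, then ζ = E[ζ] P-a.s., i.e. ζ is almost surely constant. -/
open MeasureTheory ProbabilityTheory



section Aux

variable {Ω : Type*} [m0 : MeasurableSpace Ω] {P : Measure Ω} [IsProbabilityMeasure P]

lemma aux_integrable {f : Ω → ℝ} (hf : AEStronglyMeasurable f P) {M : ℝ}
    (hb : ∀ ω, |f ω| ≤ M) : Integrable f P :=
  Integrable.mono' (integrable_const M) hf
    (Filter.Eventually.of_forall fun ω => by simpa [Real.norm_eq_abs] using hb ω)

/-- Pairing with a conditional expectation: for `g` bounded and `m`-measurable and any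
a.e. version `f'` of `P[f|m]`, `∫ g f = ∫ g f'`. -/
lemma aux_pairing {m : MeasurableSpace Ω} (hm : m ≤ m0) {f g : Ω → ℝ}
    (hf : Integrable f P) (hg : Measurable[m] g) {Mg : ℝ} (hgb : ∀ ω, |g ω| ≤ Mg)
    {f' : Ω → ℝ} (hf' : f' =ᵐ[P] P[f|m]) :
    ∫ ω, g ω * f ω ∂P = ∫ ω, g ω * f' ω ∂P := by
  have hgm0 : AEStronglyMeasurable[m0] g P :=
    ((hg.mono hm le_rfl).stronglyMeasurable).aestronglyMeasurable
  have hbdd : ∃ C, ∀ ω, ‖g ω‖ ≤ C := ⟨Mg, fun ω => by simpa [Real.norm_eq_abs] using hgb ω⟩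
  have h1 : Integrable (g * f) P := hf.bdd_mul hgm0 (Filter.Eventually.of_forall hbdd.choose_spec)
  have h2 : P[g * f|m] =ᵐ[P] g * P[f|m] :=
    condExp_mul_of_stronglyMeasurable_left hg.stronglyMeasurable h1 hf
  calc ∫ ω, g ω * f ω ∂P = ∫ ω, (g * f) ω ∂P := rfl
    _ = ∫ ω, (P[g * f|m]) ω ∂P := (integral_condExp hm).symm
    _ = ∫ ω, (g * P[f|m]) ω ∂P := integral_congr_ae h2
    _ = ∫ ω, g ω * f' ω ∂P := by
        refine integral_congr_ae ?_
        filter_upwards [hf'] with ω hω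
        simp [Pi.mul_apply, hω]

/-- Cauchy–Schwarz for integrals of bounded functions. -/
lemma aux_cs {u v : Ω → ℝ} (hu : AEStronglyMeasurable u P) (hv : AEStronglyMeasurable v P)
    {Mu Mv : ℝ} (hub : ∀ ω, |u ω| ≤ Mu) (hvb : ∀ ω, |v ω| ≤ Mv) :
    (∫ ω, u ω * v ω ∂P) ^ 2 ≤ (∫ ω, u ω * u ω ∂P) * (∫ ω, v ω * v ω ∂P) := by
  have habs : ∀ (a b : Ω → ℝ) (Ma Mb : ℝ), (∀ ω, |a ω| ≤ Ma) → (∀ ω, |b ω| ≤ Mb) →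
      ∀ ω, |a ω * b ω| ≤ Ma * Mb := by
    intro a b Ma Mb ha hb ω
    rw [abs_mul]
    exact mul_le_mul (ha ω) (hb ω) (abs_nonneg _) ((abs_nonneg _).trans (ha ω))
  have huu : Integrable (fun ω => u ω * u ω) P :=
    aux_integrable (hu.mul hu) (habs u u Mu Mu hub hub)
  have hvv : Integrable (fun ω => v ω * v ω) P :=
    aux_integrable (hv.mul hv) (habs v v Mv Mv hvb hvb)
  have huv : Integrable (fun ω => u ω * v ω) P :=
    aux_integrable (hu.mul hv) (habs u v Mu Mv hub hvb)
  set Auu := ∫ ω, u ω * u ω ∂P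
  set Auv := ∫ ω, u ω * v ω ∂P
  set Avv := ∫ ω, v ω * v ω ∂P
  have key : ∀ t : ℝ, 0 ≤ Avv * (t * t) + (2 * Auv) * t + Auu := by
    intro t
    have hnn : 0 ≤ ∫ ω, (u ω + t * v ω) * (u ω + t * v ω) ∂P :=
      integral_nonneg fun ω => mul_self_nonneg _
    have hexp : ∫ ω, (u ω + t * v ω) * (u ω + t * v ω) ∂P
        = Auu + ((2 * t) * Auv + (t * t) * Avv) := by
      have : (fun ω => (u ω + t * v ω) * (u ω + t * v ω))
          = fun ω => u ω * u ω + ((2 * t) * (u ω * v ω) + (t * t) * (v ω * v ω)) := by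
        funext ω; ring
      have hg2 : Integrable (fun ω => 2 * t * (u ω * v ω) + t * t * (v ω * v ω)) P :=
        (huv.const_mul (2*t)).add (hvv.const_mul (t*t))
      rw [this, integral_add huu hg2,
        integral_add (huv.const_mul (2*t)) (hvv.const_mul (t*t))]
      simp only [integral_const_mul]; rfl
    nlinarith [hnn, hexp]
  have hd := discrim_le_zero key
  rw [discrim] at hd
  nlinarith [hd]

/-- Pythagoras-style identity. -/
lemma aux_pyth {u v : Ω → ℝ} (hu : AEStronglyMeasurable u P) (hv : AEStronglyMeasurable v P)
    {Mu Mv : ℝ} (hub : ∀ ω, |u ω| ≤ Mu) (hvb : ∀ ω, |v ω| ≤ Mv)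
    (hcross : ∫ ω, v ω * u ω ∂P = ∫ ω, v ω * v ω ∂P) :
    (∫ ω, v ω * v ω ∂P) + ∫ ω, (u ω - v ω) * (u ω - v ω) ∂P = ∫ ω, u ω * u ω ∂P := by
  have habs : ∀ (a b : Ω → ℝ) (Ma Mb : ℝ), (∀ ω, |a ω| ≤ Ma) → (∀ ω, |b ω| ≤ Mb) →
      ∀ ω, |a ω * b ω| ≤ Ma * Mb := by
    intro a b Ma Mb ha hb ω
    rw [abs_mul]
    exact mul_le_mul (ha ω) (hb ω) (abs_nonneg _) ((abs_nonneg _).trans (ha ω))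
  have huu : Integrable (fun ω => u ω * u ω) P :=
    aux_integrable (hu.mul hu) (habs u u Mu Mu hub hub)
  have hvv : Integrable (fun ω => v ω * v ω) P :=
    aux_integrable (hv.mul hv) (habs v v Mv Mv hvb hvb)
  have hvu : Integrable (fun ω => v ω * u ω) P :=
    aux_integrable (hv.mul hu) (habs v u Mv Mu hvb hub)
  have hexp : ∫ ω, (u ω - v ω) * (u ω - v ω) ∂P
      = (∫ ω, u ω * u ω ∂P) - 2 * (∫ ω, v ω * u ω ∂P) + ∫ ω, v ω * v ω ∂P := by
    have : (fun ω => (u ω - v ω) * (u ω - v ω))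
        = fun ω => u ω * u ω - 2 * (v ω * u ω) + v ω * v ω := by
      funext ω; ring
    have hsub : Integrable (fun ω => u ω * u ω - 2 * (v ω * u ω)) P :=
      huu.sub (hvu.const_mul 2)
    rw [this, integral_add hsub hvv,
      integral_sub huu (hvu.const_mul 2)]
    simp only [integral_const_mul]
  rw [hexp, hcross]; ring

/-- A measurable bounded function whose rational sublevel sets have probability zero or one
is a.e. constant. -/
lemma aux_ae_const {Z : Ω → ℝ} (hZ : Measurable Z) {M : ℝ} (hb : ∀ ω, |Z ω| ≤ M)
    (h01 : ∀ q : ℚ, P {ω | Z ω ≤ (q : ℝ)} = 0 ∨ P {ω | Z ω ≤ (q : ℝ)} = 1) :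
    ∃ c : ℝ, Z =ᵐ[P] fun _ => c := by
  set S : Set ℝ := (fun q : ℚ => (q : ℝ)) '' {q : ℚ | P {ω | Z ω ≤ (q : ℝ)} = 1} with hS
  obtain ⟨q0, hq0⟩ := exists_rat_gt M
  have hSne : S.Nonempty := by
    refine ⟨((q0 : ℚ) : ℝ), Set.mem_image_of_mem _ ?_⟩
    have huniv : {ω | Z ω ≤ ((q0 : ℚ) : ℝ)} = Set.univ := by
      ext ω
      simp only [Set.mem_setOf_eq, Set.mem_univ, iff_true]
      have h1 : Z ω ≤ M := (le_abs_self _).trans (hb ω)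
      linarith
    show P {ω | Z ω ≤ ((q0 : ℚ) : ℝ)} = 1
    rw [huniv]; exact measure_univ
  have hSbdd : BddBelow S := by
    refine ⟨-M, fun t ht => ?_⟩
    obtain ⟨q, hq, rfl⟩ := ht
    simp only [Set.mem_setOf_eq] at hq
    by_contra hlt
    push_neg at hlt
    have hemp : {ω | Z ω ≤ (q : ℝ)} = ∅ := by
      ext ω
      simp only [Set.mem_setOf_eq, Set.mem_empty_iff_false, iff_false, not_le]
      have : -M ≤ Z ω := neg_le_of_abs_le (hb ω)
      linarith
    rw [hemp] at hq
    simp at hq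
  set c := sInf S with hc
  refine ⟨c, ?_⟩
  have null1 : P {ω | Z ω < c} = 0 := by
    have hsub : {ω | Z ω < c} ⊆ ⋃ q : ℚ, {ω | Z ω ≤ (q : ℝ) ∧ (q : ℝ) < c} := by
      intro ω hω
      obtain ⟨q, h1, h2⟩ := exists_rat_btwn (show Z ω < c from hω)
      exact Set.mem_iUnion.2 ⟨q, h1.le, h2⟩
    refine measure_mono_null hsub (measure_iUnion_null fun q => ?_)
    by_cases hq : (q : ℝ) < c
    · have hne : P {ω | Z ω ≤ (q : ℝ)} = 0 := by
        rcases h01 q with h | h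
        · exact h
        · exact absurd (csInf_le hSbdd ⟨q, h, rfl⟩) (not_le.2 hq)
      exact measure_mono_null (fun ω hω => hω.1) hne
    · refine measure_mono_null (fun ω hω => (hq hω.2 : (ω ∈ (∅ : Set Ω)))) measure_empty
  have null2 : P {ω | c < Z ω} = 0 := by
    have hsub : {ω | c < Z ω} ⊆ ⋃ q : ℚ, {ω | (q : ℝ) < Z ω ∧ c < (q : ℝ)} := by
      intro ω hω
      obtain ⟨q, h1, h2⟩ := exists_rat_btwn (show c < Z ω from hω)
      exact Set.mem_iUnion.2 ⟨q, h2, h1⟩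
    refine measure_mono_null hsub (measure_iUnion_null fun q => ?_)
    by_cases hq : c < (q : ℝ)
    · obtain ⟨t, ht, htq⟩ := exists_lt_of_csInf_lt hSne hq
      obtain ⟨r, hr, rfl⟩ := ht
      have hmeas : MeasurableSet {ω | Z ω ≤ (r : ℝ)} := hZ measurableSet_Iic
      have hcompl : P {ω | Z ω ≤ (r : ℝ)}ᶜ = 0 := by
        rw [measure_compl hmeas (measure_ne_top _ _), hr, measure_univ]
        simp
      refine measure_mono_null (fun ω hω => ?_) hcompl
      intro hle
      have := hω.1
      simp only [Set.mem_setOf_eq] at hle this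
      linarith
    · refine measure_mono_null (fun ω hω => (hq hω.2 : (ω ∈ (∅ : Set Ω)))) measure_empty
  rw [Filter.eventuallyEq_iff_exists_mem]
  refine ⟨{ω | Z ω < c}ᶜ ∩ {ω | c < Z ω}ᶜ, ?_, fun ω hω => ?_⟩
  · rw [mem_ae_iff]
    rw [Set.compl_inter, compl_compl, compl_compl]
    exact measure_union_null null1 null2
  · have h1 := hω.1
    have h2 := hω.2
    simp only [Set.mem_compl_iff, Set.mem_setOf_eq, not_lt] at h1 h2
    exact le_antisymm h2 h1

end Aux


/-- Lemma 3.2 (abstract form): let `(A ℓ, B ℓ, C ℓ)` be independent triples of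
sub-σ-algebras with `(A ℓ)` nondecreasing, `(B ℓ ⊔ C ℓ)` nonincreasing with
trivial tail, and `σ(⋃ A m) ⊆ A ℓ ⊔ B ℓ ⊔ C ℓ`. If each `τ ℓ` is measure
preserving, swaps bounded `A ℓ`- and `B ℓ`-measurable functions, and fixes
bounded `C ℓ`-measurable functions a.s., then every bounded
`σ(⋃ A m)`-measurable `ζ` with `ζ ∘ τ ℓ = ζ` a.s. for all `ℓ` is a.s. constant,
equal to its expectation. -/
theorem invariant_under_swaps_is_constant
    {Ω : Type*} [m0 : MeasurableSpace Ω] (P : Measure Ω) [IsProbabilityMeasure P]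
    (A B C : ℕ → MeasurableSpace Ω)
    (hA : ∀ ℓ, A ℓ ≤ m0) (hB : ∀ ℓ, B ℓ ≤ m0) (hC : ∀ ℓ, C ℓ ≤ m0)
    (hindep : ∀ ℓ, iIndep ![A ℓ, B ℓ, C ℓ] P)
    (hAmono : Monotone A)
    (hHanti : Antitone (fun ℓ => B ℓ ⊔ C ℓ))
    (htail : ∀ s : Set Ω, MeasurableSet[⨅ ℓ, B ℓ ⊔ C ℓ] s → P s = 0 ∨ P s = 1)
    (hgen : ∀ ℓ, (⨆ k, A k) ≤ A ℓ ⊔ B ℓ ⊔ C ℓ)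
    (τ : ℕ → Ω → Ω)
    (hτmeas : ∀ ℓ, @Measurable Ω Ω m0 m0 (τ ℓ))
    (hτpres : ∀ ℓ, @MeasurePreserving Ω Ω m0 m0 (τ ℓ) P P)
    (hAB : ∀ ℓ, ∀ f : Ω → ℝ, (∃ M, ∀ ω, |f ω| ≤ M) → Measurable[A ℓ] f →
      Measurable[B ℓ] (f ∘ τ ℓ))
    (hBA : ∀ ℓ, ∀ f : Ω → ℝ, (∃ M, ∀ ω, |f ω| ≤ M) → Measurable[B ℓ] f →
      Measurable[A ℓ] (f ∘ τ ℓ))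
    (hCfix : ∀ ℓ, ∀ f : Ω → ℝ, (∃ M, ∀ ω, |f ω| ≤ M) → Measurable[C ℓ] f →
      f ∘ τ ℓ =ᵐ[P] f)
    (ζ : Ω → ℝ)
    (hζbdd : ∃ M, ∀ ω, |ζ ω| ≤ M)
    (hζmeas : Measurable[⨆ k, A k] ζ)
    (hζinv : ∀ ℓ, ζ ∘ τ ℓ =ᵐ[P] ζ) :
    ζ =ᵐ[P] fun _ => ∫ x, ζ x ∂P := by
  classical
  obtain ⟨M₀, hM₀⟩ := hζbdd
  set c : ℝ := ∫ x, ζ x ∂P with hcdef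
  set M : ℝ := max M₀ 0 with hMdef
  have hM0 : (0:ℝ) ≤ M := le_max_right _ _
  have hM : ∀ ω, |ζ ω| ≤ M := fun ω => (hM₀ ω).trans (le_max_left _ _)
  have hsupA : (⨆ k, A k) ≤ m0 := iSup_le hA
  have hζm : Measurable ζ := hζmeas.mono hsupA le_rfl
  have hζint : Integrable ζ P := aux_integrable hζm.aestronglyMeasurable hM
  set H : ℕ → MeasurableSpace Ω := fun ℓ => B ℓ ⊔ C ℓ with hHdef
  have hH : ∀ ℓ, H ℓ ≤ m0 := fun ℓ => sup_le (hB ℓ) (hC ℓ)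
  -- truncation
  set tr : ℝ → ℝ := fun x => max (-M) (min x M) with htrdef
  have htr_bd : ∀ x, |tr x| ≤ M := fun x => abs_le.2 ⟨le_max_left _ _,
    max_le (by linarith) (min_le_right _ _)⟩
  have htr_id : ∀ x, |x| ≤ M → tr x = x := fun x hx => by
    show max (-M) (min x M) = x
    rw [min_eq_left (abs_le.1 hx).2, max_eq_right (abs_le.1 hx).1]
  have htr_cont : Continuous tr := continuous_const.max (continuous_id.min continuous_const)
  have htr_meas : Measurable tr := htr_cont.measurable
  -- centered variable
  set φ : Ω → ℝ := fun ω => ζ ω - c with hφdef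
  set M' : ℝ := M + |c| with hM'def
  have hM'0 : (0:ℝ) ≤ M' := by have := abs_nonneg c; rw [hM'def]; linarith
  have hφbd : ∀ ω, |φ ω| ≤ M' := fun ω => by
    have h1 := abs_le.1 (hM ω)
    have h2 := le_abs_self c
    have h3 := neg_abs_le c
    show |ζ ω - c| ≤ M + |c|
    rw [abs_le]; constructor <;> linarith
  have hφm : Measurable φ := hζm.sub measurable_const
  have hφint : Integrable φ P := aux_integrable hφm.aestronglyMeasurable hφbd
  -- conditional expectation versions
  have hcond : ∀ (m : MeasurableSpace Ω), m ≤ m0 →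
      (fun ω => tr ((P[ζ|m]) ω) - c) =ᵐ[P] P[φ|m] := by
    intro m hm
    have h1 : P[φ|m] =ᵐ[P] P[ζ|m] - P[(fun _ => c)|m] := by
      have heq : φ = ζ - fun _ => c := rfl
      rw [heq]
      exact condExp_sub hζint (integrable_const c) m
    have h2 : P[(fun _ => c)|m] = fun _ => c := condExp_const hm c
    have h3 : ∀ᵐ ω ∂P, |(P[ζ|m]) ω| ≤ M := by
      have : ∀ᵐ ω ∂P, |(P[ζ|m]) ω| ≤ ((⟨M, hM0⟩ : NNReal) : ℝ) :=
        ae_bdd_condExp_of_ae_bdd (Filter.Eventually.of_forall (fun ω => hM ω))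
      exact this
    filter_upwards [h1, h3] with ω hω1 hω2
    rw [htr_id _ hω2, hω1, h2]
    simp
  set F : ℕ → Ω → ℝ := fun ℓ ω => tr ((P[ζ|A ℓ]) ω) - c with hFdef
  set G : ℕ → Ω → ℝ := fun k ω => tr ((P[ζ|H k]) ω) - c with hGdef
  have hFmeas : ∀ ℓ, Measurable[A ℓ] (F ℓ) := fun ℓ =>
    (htr_meas.comp stronglyMeasurable_condExp.measurable).sub measurable_const
  have hGmeas : ∀ k, Measurable[H k] (G k) := fun k =>
    (htr_meas.comp stronglyMeasurable_condExp.measurable).sub measurable_const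
  have hFm0 : ∀ ℓ, Measurable (F ℓ) := fun ℓ => (hFmeas ℓ).mono (hA ℓ) le_rfl
  have hGm0 : ∀ k, Measurable (G k) := fun k => (hGmeas k).mono (hH k) le_rfl
  have hbd' : ∀ x, |tr x - c| ≤ M' := fun x => by
    have h1 := abs_le.1 (htr_bd x)
    have h2 := le_abs_self c
    have h3 := neg_abs_le c
    rw [hM'def, abs_le]; constructor <;> linarith
  have hFbd : ∀ ℓ ω, |F ℓ ω| ≤ M' := fun ℓ ω => hbd' _
  have hGbd : ∀ k ω, |G k ω| ≤ M' := fun k ω => hbd' _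
  have hFae : ∀ ℓ, F ℓ =ᵐ[P] P[φ|A ℓ] := fun ℓ => hcond (A ℓ) (hA ℓ)
  have hGae : ∀ k, G k =ᵐ[P] P[φ|H k] := fun k => hcond (H k) (hH k)
  have hGint : ∀ k, Integrable (G k) P := fun k =>
    aux_integrable (hGm0 k).aestronglyMeasurable (hGbd k)
  -- key 1 : ∫ F ℓ ² ≤ ∫ G ℓ ²
  have key1 : ∀ ℓ, ∫ ω, F ℓ ω * F ℓ ω ∂P ≤ ∫ ω, G ℓ ω * G ℓ ω ∂P := by
    intro ℓ
    have hmap : Measure.map (τ ℓ) P = P := (hτpres ℓ).map_eq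
    set Fτ : Ω → ℝ := fun ω => F ℓ (τ ℓ ω) with hFτdef
    have hFτmeasB : Measurable[B ℓ] Fτ := by
      have h1 : Measurable[B ℓ] ((fun ω => tr ((P[ζ|A ℓ]) ω)) ∘ τ ℓ) :=
        hAB ℓ _ ⟨M, fun ω => htr_bd _⟩ (htr_meas.comp stronglyMeasurable_condExp.measurable)
      exact h1.sub measurable_const
    have hFτm0 : Measurable Fτ := hFτmeasB.mono (hB ℓ) le_rfl
    have hFτbd : ∀ ω, |Fτ ω| ≤ M' := fun ω => hFbd ℓ _
    have s1 : ∫ ω, F ℓ ω * φ ω ∂P = ∫ ω, F ℓ ω * F ℓ ω ∂P :=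
      aux_pairing (hA ℓ) hφint (hFmeas ℓ) (hFbd ℓ) (hFae ℓ)
    have s2 : ∫ ω, F ℓ ω * φ ω ∂P = ∫ ω, Fτ ω * φ ω ∂P := by
      have h1 : ∫ ω, F ℓ ω * φ ω ∂P = ∫ ω, F ℓ (τ ℓ ω) * φ (τ ℓ ω) ∂P := by
        calc ∫ ω, F ℓ ω * φ ω ∂P = ∫ ω, F ℓ ω * φ ω ∂(Measure.map (τ ℓ) P) := by rw [hmap]
          _ = ∫ ω, F ℓ (τ ℓ ω) * φ (τ ℓ ω) ∂P := integral_map (hτmeas ℓ).aemeasurable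
              (by rw [hmap]; exact ((hFm0 ℓ).mul hφm).aestronglyMeasurable)
      have h2 : ∫ ω, F ℓ (τ ℓ ω) * φ (τ ℓ ω) ∂P = ∫ ω, Fτ ω * φ ω ∂P := by
        refine integral_congr_ae ?_
        filter_upwards [hζinv ℓ] with ω hω
        have hφτ : φ (τ ℓ ω) = φ ω := by
          show ζ (τ ℓ ω) - c = ζ ω - c
          rw [show ζ (τ ℓ ω) = ζ ω from hω]
        rw [hφτ]
      rw [h1, h2]
    have s3 : ∫ ω, Fτ ω * φ ω ∂P = ∫ ω, Fτ ω * G ℓ ω ∂P :=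
      aux_pairing (hH ℓ) hφint (hFτmeasB.mono le_sup_left le_rfl) hFτbd (hGae ℓ)
    have s5 : ∫ ω, Fτ ω * Fτ ω ∂P = ∫ ω, F ℓ ω * F ℓ ω ∂P := by
      have h1 : ∫ ω, F ℓ ω * F ℓ ω ∂P = ∫ ω, F ℓ (τ ℓ ω) * F ℓ (τ ℓ ω) ∂P := by
        calc ∫ ω, F ℓ ω * F ℓ ω ∂P = ∫ ω, F ℓ ω * F ℓ ω ∂(Measure.map (τ ℓ) P) := by rw [hmap]
          _ = ∫ ω, F ℓ (τ ℓ ω) * F ℓ (τ ℓ ω) ∂P := integral_map (hτmeas ℓ).aemeasurable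
              (by rw [hmap]; exact ((hFm0 ℓ).mul (hFm0 ℓ)).aestronglyMeasurable)
      exact h1.symm
    have s4 : (∫ ω, Fτ ω * G ℓ ω ∂P) ^ 2
        ≤ (∫ ω, Fτ ω * Fτ ω ∂P) * ∫ ω, G ℓ ω * G ℓ ω ∂P :=
      aux_cs hFτm0.aestronglyMeasurable (hGm0 ℓ).aestronglyMeasurable hFτbd (hGbd ℓ)
    have ha0 : 0 ≤ ∫ ω, F ℓ ω * F ℓ ω ∂P := integral_nonneg fun ω => mul_self_nonneg _
    have hb0 : 0 ≤ ∫ ω, G ℓ ω * G ℓ ω ∂P := integral_nonneg fun ω => mul_self_nonneg _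
    nlinarith [s1, s2, s3, s4, s5, ha0, hb0]
  -- key 2 : monotonicity of ∫ G k ²
  have key2 : ∀ k ℓ, k ≤ ℓ → ∫ ω, G ℓ ω * G ℓ ω ∂P ≤ ∫ ω, G k ω * G k ω ∂P := by
    intro k ℓ hkl
    have hf' : G ℓ =ᵐ[P] P[G k|H ℓ] :=
      (hGae ℓ).trans ((condExp_condExp_of_le (hHanti hkl) (hH k)).symm.trans
        (condExp_congr_ae (hGae k)).symm)
    have hcross : ∫ ω, G ℓ ω * G k ω ∂P = ∫ ω, G ℓ ω * G ℓ ω ∂P :=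
      aux_pairing (hH ℓ) (hGint k) (hGmeas ℓ) (hGbd ℓ) hf'
    have hpyth := aux_pyth (hGm0 k).aestronglyMeasurable (hGm0 ℓ).aestronglyMeasurable
      (hGbd k) (hGbd ℓ) hcross
    have hnn : 0 ≤ ∫ ω, (G k ω - G ℓ ω) * (G k ω - G ℓ ω) ∂P :=
      integral_nonneg fun ω => mul_self_nonneg _
    linarith
  -- key 3 : convergence of ∫ F ℓ ² to ∫ φ ²
  have key3 : Filter.Tendsto (fun ℓ => ∫ ω, F ℓ ω * F ℓ ω ∂P) Filter.atTop
      (nhds (∫ ω, φ ω * φ ω ∂P)) := by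
    set ℱ : Filtration ℕ m0 := ⟨A, hAmono, hA⟩ with hℱdef
    have hLevy : ∀ᵐ ω ∂P, Filter.Tendsto (fun n => (P[ζ|ℱ n]) ω) Filter.atTop (nhds (ζ ω)) :=
      hζint.tendsto_ae_condExp (show StronglyMeasurable[⨆ n, ℱ n] ζ from
        hζmeas.stronglyMeasurable)
    have hptwise : ∀ᵐ ω ∂P, Filter.Tendsto (fun ℓ => F ℓ ω * F ℓ ω) Filter.atTop
        (nhds (φ ω * φ ω)) := by
      filter_upwards [hLevy] with ω hω
      have h1 : Filter.Tendsto (fun ℓ => tr ((P[ζ|A ℓ]) ω)) Filter.atTop (nhds (tr (ζ ω))) :=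
        (htr_cont.tendsto _).comp hω
      have h2 : tr (ζ ω) = ζ ω := htr_id _ (hM ω)
      have h3 : Filter.Tendsto (fun ℓ => F ℓ ω) Filter.atTop (nhds (φ ω)) := by
        have := h1.sub_const c
        rw [h2] at this
        exact this
      exact h3.mul h3
    refine tendsto_integral_of_dominated_convergence (fun _ => M' * M')
      (fun ℓ => ((hFm0 ℓ).mul (hFm0 ℓ)).aestronglyMeasurable) (integrable_const _)
      (fun ℓ => Filter.Eventually.of_forall fun ω => ?_) hptwise
    rw [Real.norm_eq_abs, abs_mul]
    exact mul_le_mul (hFbd ℓ ω) (hFbd ℓ ω) (abs_nonneg _) ((abs_nonneg _).trans (hFbd ℓ ω))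
  -- key 4
  have key4 : ∀ k, ∫ ω, φ ω * φ ω ∂P ≤ ∫ ω, G k ω * G k ω ∂P := by
    intro k
    refine le_of_tendsto key3 (Filter.eventually_atTop.2 ⟨k, fun ℓ hk => ?_⟩)
    exact (key1 ℓ).trans (key2 k ℓ hk)
  -- key 5 : ζ is a.e. equal to each G k (up to centering)
  have key5 : ∀ k, ∀ᵐ ω ∂P, ζ ω = tr ((P[ζ|H k]) ω) := by
    intro k
    have hcross : ∫ ω, G k ω * φ ω ∂P = ∫ ω, G k ω * G k ω ∂P :=
      aux_pairing (hH k) hφint (hGmeas k) (hGbd k) (hGae k)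
    have hpyth := aux_pyth hφm.aestronglyMeasurable (hGm0 k).aestronglyMeasurable
      hφbd (hGbd k) hcross
    have hle : ∫ ω, (φ ω - G k ω) * (φ ω - G k ω) ∂P ≤ 0 := by
      have := key4 k; linarith
    have hzero : ∫ ω, (φ ω - G k ω) * (φ ω - G k ω) ∂P = 0 :=
      le_antisymm hle (integral_nonneg fun ω => mul_self_nonneg _)
    have hint : Integrable (fun ω => (φ ω - G k ω) * (φ ω - G k ω)) P := by
      refine aux_integrable ((hφm.sub (hGm0 k)).mul (hφm.sub (hGm0 k))).aestronglyMeasurable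
        (M := (M' + M') * (M' + M')) fun ω => ?_
      rw [abs_mul]
      have hd : |φ ω - G k ω| ≤ M' + M' := by
        have h1 := abs_le.1 (hφbd ω); have h2 := abs_le.1 (hGbd k ω)
        rw [abs_le]; constructor <;> linarith
      exact mul_le_mul hd hd (abs_nonneg _) (by linarith [abs_nonneg (φ ω - G k ω)])
    have hae0 := (integral_eq_zero_iff_of_nonneg (fun ω => mul_self_nonneg _) hint).1 hzero
    filter_upwards [hae0] with ω hω
    have : φ ω - G k ω = 0 := by
      have hω' : (φ ω - G k ω) * (φ ω - G k ω) = 0 := hω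
      exact mul_self_eq_zero.1 hω'
    have hφG : φ ω = G k ω := by linarith [this]
    show ζ ω = tr ((P[ζ|H k]) ω)
    have : ζ ω - c = tr ((P[ζ|H k]) ω) - c := hφG
    linarith
  -- tail argument
  set g : ℕ → Ω → ℝ := fun k ω => tr ((P[ζ|H k]) ω) with hgdef
  have hgmeas : ∀ k, Measurable[H k] (g k) := fun k =>
    htr_meas.comp stronglyMeasurable_condExp.measurable
  have hgbd : ∀ k ω, |g k ω| ≤ M := fun k ω => htr_bd _
  have h01 : ∀ q : ℚ, P {ω | ζ ω ≤ (q : ℝ)} = 0 ∨ P {ω | ζ ω ≤ (q : ℝ)} = 1 := by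
    intro q
    set sq : Set Ω := ⋂ j, ⋃ k, ⋃ (_ : j ≤ k), {ω | g k ω ≤ (q : ℝ)} with hsqdef
    have hsqmeas : MeasurableSet[⨅ ℓ, H ℓ] sq := by
      rw [MeasurableSpace.measurableSet_iInf]
      intro j0
      have hU : ∀ j, MeasurableSet[H j0] (⋃ k, ⋃ (_ : j + j0 ≤ k), {ω | g k ω ≤ (q : ℝ)}) := by
        intro j
        refine MeasurableSet.iUnion fun k => MeasurableSet.iUnion fun hk => ?_
        have hk0 : j0 ≤ k := le_trans (Nat.le_add_left j0 j) hk
        exact (hHanti hk0) _ ((hgmeas k) measurableSet_Iic)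
      have hEq : sq = ⋂ j, ⋃ k, ⋃ (_ : j + j0 ≤ k), {ω | g k ω ≤ (q : ℝ)} := by
        apply Set.Subset.antisymm
        · exact Set.subset_iInter fun j => Set.iInter_subset _ (j + j0)
        · refine Set.subset_iInter fun j => fun x hx => ?_
          have hx' := Set.mem_iInter.1 hx j
          simp only [Set.mem_iUnion] at hx' ⊢
          obtain ⟨k, hk, hxk⟩ := hx'
          exact ⟨k, le_trans (Nat.le_add_right j j0) hk, hxk⟩
      rw [hEq]
      exact MeasurableSet.iInter hU
    have hsq_ae : sq =ᵐ[P] {ω | ζ ω ≤ (q : ℝ)} := by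
      have hall : ∀ᵐ ω ∂P, ∀ k, ζ ω = g k ω := ae_all_iff.2 key5
      filter_upwards [hall] with ω hω
      show (ω ∈ sq) = (ω ∈ {ω | ζ ω ≤ (q : ℝ)})
      simp only [hsqdef, Set.mem_iInter, Set.mem_iUnion, Set.mem_setOf_eq, eq_iff_iff]
      constructor
      · intro h
        obtain ⟨k, _, hle⟩ := h 0
        rw [hω k]; exact hle
      · intro h j
        exact ⟨j, le_rfl, by rw [← hω j]; exact h⟩
    have := htail sq hsqmeas
    rwa [measure_congr hsq_ae] at this
  obtain ⟨c', hconst⟩ := aux_ae_const hζm hM h01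
  have hc' : c = c' := by
    calc c = ∫ x, ζ x ∂P := hcdef
      _ = ∫ _x, c' ∂P := integral_congr_ae hconst
      _ = c' := by simp
  filter_upwards [hconst] with ω hω
  show ζ ω = c
  rw [hω, hc']
end

section
/- Conditional expectation identity under a swapping measure-preserving transformation (proved inside Lemma 3.2): Let (Ω, F, P) be a probability space and A, B, C sub-σ-algebras of F such that the triple (A, B, C) is independent under P. Let τ : Ω → Ω be measurable and measure preserving (P ∘ τ⁻¹ = P) such that: f ∘ τ is B-measurable for every bounded A-measurable f : Ω → ℝ; f ∘ τ is A-measurable for every bounded B-measurable f; and f ∘ τ = f P-a.s. for every bounded C-measurable f. Then for every P-integrable θ : Ω → ℝ measurable with respect to A ∨ B ∨ C one has E[θ ∘ τ | B ∨ C] = E[θ | A ∨ C] ∘ τ, P-almost surely. -/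
open MeasureTheory ProbabilityTheory Filter


private lemma exists_simple_approx_L1 {Ω : Type*} [m : MeasurableSpace Ω] (P : Measure Ω)
    (θ : Ω → ℝ) (hθmeas : Measurable θ) (hθint : Integrable θ P) :
    ∃ gs : ℕ → SimpleFunc Ω ℝ,
      Filter.Tendsto (fun n => eLpNorm (⇑(gs n) - θ) 1 P) Filter.atTop (nhds 0) := by
  have : TopologicalSpace.SeparableSpace (Set.range θ ∪ {0} : Set ℝ) :=
    hθmeas.stronglyMeasurable.separableSpace_range_union_singleton
  refine ⟨fun n => SimpleFunc.approxOn θ hθmeas (Set.range θ ∪ {0}) 0 (by simp) n, ?_⟩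
  have h := SimpleFunc.tendsto_approxOn_range_L1_enorm hθmeas hθint
  refine h.congr fun n => ?_
  rw [eLpNorm_one_eq_lintegral_enorm]
  rfl

/-- Conditional expectation identity under a swapping measure-preserving
transformation: if the triple `(A, B, C)` is independent, `τ` is measure preserving,
maps bounded `A`-measurable functions to `B`-measurable ones and vice versa, and
fixes bounded `C`-measurable functions a.s., then
`E[θ ∘ τ | B ∨ C] = E[θ | A ∨ C] ∘ τ` a.s. for every integrable
`A ∨ B ∨ C`-measurable `θ`. -/
theorem condexp_swap
    {Ω : Type*} [m0 : MeasurableSpace Ω] (P : Measure Ω) [IsProbabilityMeasure P]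
    (A B C : MeasurableSpace Ω)
    (hA : A ≤ m0) (hB : B ≤ m0) (hC : C ≤ m0)
    (hindep : iIndep ![A, B, C] P)
    (τ : Ω → Ω) (hτmeas : @Measurable Ω Ω m0 m0 τ)
    (hτpres : @MeasurePreserving Ω Ω m0 m0 τ P P)
    (hAB : ∀ f : Ω → ℝ, (∃ M, ∀ ω, |f ω| ≤ M) → Measurable[A] f →
      Measurable[B] (f ∘ τ))
    (hBA : ∀ f : Ω → ℝ, (∃ M, ∀ ω, |f ω| ≤ M) → Measurable[B] f →
      Measurable[A] (f ∘ τ))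
    (hCfix : ∀ f : Ω → ℝ, (∃ M, ∀ ω, |f ω| ≤ M) → Measurable[C] f →
      f ∘ τ =ᵐ[P] f)
    (θ : Ω → ℝ) (hθint : Integrable θ P) (hθmeas : Measurable[A ⊔ B ⊔ C] θ) :
    P[θ ∘ τ|B ⊔ C] =ᵐ[P] (P[θ|A ⊔ C]) ∘ τ := by
  classical
  letI inst0 : MeasurableSpace Ω := m0
  have hBC : B ⊔ C ≤ m0 := sup_le hB hC
  have hAC : A ⊔ C ≤ m0 := sup_le hA hC
  have hm' : A ⊔ B ⊔ C ≤ m0 := sup_le (sup_le hA hB) hC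
  have hqmp := hτpres.quasiMeasurePreserving
  -- independence facts
  have hIndepA : Indep A (B ⊔ C) P := by
    have h := ProbabilityTheory.indep_iSup_of_disjoint (m := ![A, B, C]) (μ := P)
      (fun i => by fin_cases i <;> assumption) hindep
      (S := {0}) (T := {1, 2}) (by simp [Set.disjoint_left])
    have h0 : (⨆ i ∈ ({0} : Set (Fin 3)), ![A, B, C] i) = A := by
      rw [iSup_singleton]; simp
    have h12 : (⨆ i ∈ ({1, 2} : Set (Fin 3)), ![A, B, C] i) = B ⊔ C := by
      rw [show ({1, 2} : Set (Fin 3)) = insert 1 {2} from rfl, iSup_insert, iSup_singleton]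
      simp
    rwa [h0, h12] at h
  have hIndepB : Indep B (A ⊔ C) P := by
    have h := ProbabilityTheory.indep_iSup_of_disjoint (m := ![A, B, C]) (μ := P)
      (fun i => by fin_cases i <;> assumption) hindep
      (S := {1}) (T := {0, 2}) (by simp [Set.disjoint_left])
    have h0 : (⨆ i ∈ ({1} : Set (Fin 3)), ![A, B, C] i) = B := by
      rw [iSup_singleton]; simp
    have h12 : (⨆ i ∈ ({0, 2} : Set (Fin 3)), ![A, B, C] i) = A ⊔ C := by
      rw [show ({0, 2} : Set (Fin 3)) = insert 0 {2} from rfl, iSup_insert, iSup_singleton]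
      simp
    rwa [h0, h12] at h
  -- indicator notation
  set 𝒾 : Set Ω → Ω → ℝ := fun s => s.indicator (fun _ => (1 : ℝ)) with h𝒾
  have indbd : ∀ s : Set Ω, ∃ M, ∀ ω, |𝒾 s ω| ≤ M := by
    intro s
    refine ⟨1, fun ω => ?_⟩
    by_cases hω : ω ∈ s <;> simp [h𝒾, Set.indicator, hω]
  have hind01 : ∀ (s : Set Ω) (x : Ω), 𝒾 s x = 0 ∨ 𝒾 s x = 1 := by
    intro s x; by_cases hx : x ∈ s <;> simp [h𝒾, Set.indicator, hx]
  have hprod : ∀ s u : Set Ω, 𝒾 (s ∩ u) = 𝒾 s * 𝒾 u := by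
    intro s u; ext x
    by_cases hx : x ∈ s <;> by_cases hx' : x ∈ u <;>
      simp [h𝒾, Set.indicator, hx, hx']
  have hcompind : ∀ s : Set Ω, 𝒾 s ∘ τ = 𝒾 (τ ⁻¹' s) := by
    intro s; ext x
    by_cases hx : τ x ∈ s <;> simp [h𝒾, Set.indicator, hx]
  -- preimage facts
  have hpre : ∀ (M N : MeasurableSpace Ω),
      (∀ f : Ω → ℝ, (∃ M', ∀ ω, |f ω| ≤ M') → Measurable[M] f → Measurable[N] (f ∘ τ)) →
      ∀ s : Set Ω, MeasurableSet[M] s → MeasurableSet[N] (τ ⁻¹' s) := by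
    intro M N h s hs
    have hmeas : Measurable[M] (𝒾 s) := measurable_const.indicator hs
    have h2 := h _ (indbd s) hmeas (measurableSet_singleton (1 : ℝ))
    have h3 : (𝒾 s ∘ τ) ⁻¹' {1} = τ ⁻¹' s := by
      ext ω
      by_cases hω : τ ω ∈ s <;> simp [h𝒾, Set.indicator, hω]
    rwa [h3] at h2
  have hpreA : ∀ s : Set Ω, MeasurableSet[A] s → MeasurableSet[B] (τ ⁻¹' s) := hpre A B hAB
  have hpreB : ∀ s : Set Ω, MeasurableSet[B] s → MeasurableSet[A] (τ ⁻¹' s) := hpre B A hBA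
  have hpreC : ∀ s : Set Ω, MeasurableSet[C] s → 𝒾 (τ ⁻¹' s) =ᵐ[P] 𝒾 s := by
    intro s hs
    have h2 := hCfix _ (indbd s) (measurable_const.indicator hs)
    rwa [hcompind] at h2
  -- integrability helpers
  have hIndInt : ∀ s : Set Ω, MeasurableSet[m0] s → Integrable (𝒾 s) P := by
    intro s hs
    exact (integrable_const (1 : ℝ)).indicator hs
  have hτInt : ∀ g : Ω → ℝ, Integrable g P → Integrable (g ∘ τ) P := by
    intro g hg
    exact (hτpres.integrable_comp hg.aestronglyMeasurable).mpr hg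
  have hcomp : ∀ g g' : Ω → ℝ, g =ᵐ[P] g' → g ∘ τ =ᵐ[P] g' ∘ τ := by
    intro g g' h
    exact hqmp.ae_eq_comp h
  -- closure properties of the statement
  have Qconst : ∀ c : ℝ, P[(fun _ : Ω => c) ∘ τ|B ⊔ C] =ᵐ[P] (P[fun _ : Ω => c|A ⊔ C]) ∘ τ := by
    intro c
    have h1 : (fun _ : Ω => c) ∘ τ = fun _ : Ω => c := rfl
    rw [h1, condExp_const hBC c, condExp_const hAC c]
    exact Filter.EventuallyEq.rfl
  have Qadd : ∀ f g : Ω → ℝ, Integrable f P → Integrable g P →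
      P[f ∘ τ|B ⊔ C] =ᵐ[P] (P[f|A ⊔ C]) ∘ τ →
      P[g ∘ τ|B ⊔ C] =ᵐ[P] (P[g|A ⊔ C]) ∘ τ →
      P[(f + g) ∘ τ|B ⊔ C] =ᵐ[P] (P[f + g|A ⊔ C]) ∘ τ := by
    intro f g hf hg hQf hQg
    have h1 : (f + g) ∘ τ = f ∘ τ + g ∘ τ := rfl
    calc P[(f + g) ∘ τ|B ⊔ C]
        =ᵐ[P] P[f ∘ τ|B ⊔ C] + P[g ∘ τ|B ⊔ C] := by
          rw [h1]; exact condExp_add (hτInt f hf) (hτInt g hg) (B ⊔ C)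
      _ =ᵐ[P] (P[f|A ⊔ C]) ∘ τ + (P[g|A ⊔ C]) ∘ τ := hQf.add hQg
      _ =ᵐ[P] (P[f + g|A ⊔ C]) ∘ τ := (hcomp _ _ (condExp_add hf hg (A ⊔ C))).symm
  have Qsub : ∀ f g : Ω → ℝ, Integrable f P → Integrable g P →
      P[f ∘ τ|B ⊔ C] =ᵐ[P] (P[f|A ⊔ C]) ∘ τ →
      P[g ∘ τ|B ⊔ C] =ᵐ[P] (P[g|A ⊔ C]) ∘ τ →
      P[(f - g) ∘ τ|B ⊔ C] =ᵐ[P] (P[f - g|A ⊔ C]) ∘ τ := by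
    intro f g hf hg hQf hQg
    have h1 : (f - g) ∘ τ = f ∘ τ - g ∘ τ := rfl
    calc P[(f - g) ∘ τ|B ⊔ C]
        =ᵐ[P] P[f ∘ τ|B ⊔ C] - P[g ∘ τ|B ⊔ C] := by
          rw [h1]; exact condExp_sub (hτInt f hf) (hτInt g hg) (B ⊔ C)
      _ =ᵐ[P] (P[f|A ⊔ C]) ∘ τ - (P[g|A ⊔ C]) ∘ τ := hQf.sub hQg
      _ =ᵐ[P] (P[f - g|A ⊔ C]) ∘ τ := (hcomp _ _ (condExp_sub hf hg (A ⊔ C))).symm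
  have Qsmul : ∀ (c : ℝ) (f : Ω → ℝ),
      P[f ∘ τ|B ⊔ C] =ᵐ[P] (P[f|A ⊔ C]) ∘ τ →
      P[(c • f) ∘ τ|B ⊔ C] =ᵐ[P] (P[c • f|A ⊔ C]) ∘ τ := by
    intro c f hQf
    have h1 : (c • f) ∘ τ = c • (f ∘ τ) := rfl
    calc P[(c • f) ∘ τ|B ⊔ C] =ᵐ[P] c • P[f ∘ τ|B ⊔ C] := by
          rw [h1]; exact condExp_smul c (f ∘ τ) (B ⊔ C)
      _ =ᵐ[P] c • ((P[f|A ⊔ C]) ∘ τ) := hQf.const_smul c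
      _ =ᵐ[P] (P[c • f|A ⊔ C]) ∘ τ := (hcomp _ _ (condExp_smul c f (A ⊔ C))).symm
  -- stability under L¹ limits
  have Qlim : ∀ (g : Ω → ℝ) (gs : ℕ → Ω → ℝ), Integrable g P → (∀ n, Integrable (gs n) P) →
      (∀ n, P[gs n ∘ τ|B ⊔ C] =ᵐ[P] (P[gs n|A ⊔ C]) ∘ τ) →
      Tendsto (fun n => eLpNorm (gs n - g) 1 P) atTop (nhds 0) →
      P[g ∘ τ|B ⊔ C] =ᵐ[P] (P[g|A ⊔ C]) ∘ τ := by
    intro g gs hg hgs hQ hTen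
    set L := P[g ∘ τ|B ⊔ C] with hLdef
    set R := (P[g|A ⊔ C]) ∘ τ with hRdef
    have hmeasL : AEStronglyMeasurable L P :=
      (stronglyMeasurable_condExp.mono hBC).aestronglyMeasurable
    have hmeasR : AEStronglyMeasurable R P :=
      (((stronglyMeasurable_condExp.mono hAC).measurable).comp hτmeas).aestronglyMeasurable
    have hmeasLn : ∀ n, AEStronglyMeasurable (P[gs n ∘ τ|B ⊔ C]) P := fun n =>
      (stronglyMeasurable_condExp.mono hBC).aestronglyMeasurable
    have hmeasRn : ∀ n, AEStronglyMeasurable ((P[gs n|A ⊔ C]) ∘ τ) P := fun n =>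
      (((stronglyMeasurable_condExp.mono hAC).measurable).comp hτmeas).aestronglyMeasurable
    have hbound : ∀ n, eLpNorm (L - R) 1 P ≤
        eLpNorm (gs n - g) 1 P + eLpNorm (gs n - g) 1 P := by
      intro n
      have hint1 : Integrable (g ∘ τ) P := hτInt g hg
      have hint2 : Integrable (gs n ∘ τ) P := hτInt _ (hgs n)
      have hLn : eLpNorm (L - P[gs n ∘ τ|B ⊔ C]) 1 P ≤ eLpNorm (gs n - g) 1 P := by
        have h1 : L - P[gs n ∘ τ|B ⊔ C] =ᵐ[P] P[g ∘ τ - gs n ∘ τ|B ⊔ C] :=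
          (condExp_sub hint1 hint2 (B ⊔ C)).symm
        rw [eLpNorm_congr_ae h1]
        refine (eLpNorm_one_condExp_le_eLpNorm _).trans ?_
        have h2 : g ∘ τ - gs n ∘ τ = (g - gs n) ∘ τ := rfl
        rw [h2, eLpNorm_comp_measurePreserving (hg.sub (hgs n)).aestronglyMeasurable hτpres]
        rw [show g - gs n = -(gs n - g) from (neg_sub _ _).symm, eLpNorm_neg]
      have hRn : eLpNorm ((P[gs n|A ⊔ C]) ∘ τ - R) 1 P ≤ eLpNorm (gs n - g) 1 P := by
        have h2 : (P[gs n|A ⊔ C]) ∘ τ - R = (P[gs n|A ⊔ C] - P[g|A ⊔ C]) ∘ τ := rfl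
        rw [h2, eLpNorm_comp_measurePreserving
          ((stronglyMeasurable_condExp.mono hAC).aestronglyMeasurable.sub
            (stronglyMeasurable_condExp.mono hAC).aestronglyMeasurable) hτpres]
        rw [eLpNorm_congr_ae (condExp_sub (hgs n) hg (A ⊔ C)).symm]
        exact eLpNorm_one_condExp_le_eLpNorm _
      have hdecomp : L - R =ᵐ[P]
          (L - P[gs n ∘ τ|B ⊔ C]) + ((P[gs n|A ⊔ C]) ∘ τ - R) := by
        filter_upwards [hQ n] with x hx
        simp only [Pi.add_apply, Pi.sub_apply, Function.comp_apply] at *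
        rw [hx]; ring
      calc eLpNorm (L - R) 1 P
          = eLpNorm ((L - P[gs n ∘ τ|B ⊔ C]) + ((P[gs n|A ⊔ C]) ∘ τ - R)) 1 P :=
            eLpNorm_congr_ae hdecomp
        _ ≤ eLpNorm (L - P[gs n ∘ τ|B ⊔ C]) 1 P + eLpNorm ((P[gs n|A ⊔ C]) ∘ τ - R) 1 P :=
            eLpNorm_add_le (hmeasL.sub (hmeasLn n)) ((hmeasRn n).sub hmeasR) le_rfl
        _ ≤ _ := add_le_add hLn hRn
    have h0 : eLpNorm (L - R) 1 P = 0 := by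
      refine le_antisymm ?_ zero_le
      have hT2 : Tendsto (fun n => eLpNorm (gs n - g) 1 P + eLpNorm (gs n - g) 1 P)
          atTop (nhds 0) := by
        simpa using hTen.add hTen
      exact ge_of_tendsto hT2 (Eventually.of_forall hbound)
    have h1 := (eLpNorm_eq_zero_iff (hmeasL.sub hmeasR) one_ne_zero).mp h0
    filter_upwards [h1] with x hx
    have hx' : L x - R x = 0 := hx
    linarith
  -- π-system generating A ⊔ B ⊔ C
  set pSys : Set (Set Ω) := {s | ∃ a b c, MeasurableSet[A] a ∧ MeasurableSet[B] b ∧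
    MeasurableSet[C] c ∧ s = a ∩ b ∩ c} with hpSys
  have hgen : (A ⊔ B ⊔ C : MeasurableSpace Ω) = MeasurableSpace.generateFrom pSys := by
    refine le_antisymm ?_ (MeasurableSpace.generateFrom_le ?_)
    · refine sup_le (sup_le ?_ ?_) ?_
      · intro s hs
        exact MeasurableSpace.measurableSet_generateFrom
          ⟨s, Set.univ, Set.univ, hs, MeasurableSet.univ, MeasurableSet.univ, by simp⟩
      · intro s hs
        exact MeasurableSpace.measurableSet_generateFrom
          ⟨Set.univ, s, Set.univ, MeasurableSet.univ, hs, MeasurableSet.univ, by simp⟩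
      · intro s hs
        exact MeasurableSpace.measurableSet_generateFrom
          ⟨Set.univ, Set.univ, s, MeasurableSet.univ, MeasurableSet.univ, hs, by simp⟩
    · rintro s ⟨a, b, c, ha, hb, hc, rfl⟩
      have ha' : MeasurableSet[A ⊔ B ⊔ C] a := (le_sup_left.trans le_sup_left : A ≤ A ⊔ B ⊔ C) _ ha
      have hb' : MeasurableSet[A ⊔ B ⊔ C] b := (le_sup_right.trans le_sup_left : B ≤ A ⊔ B ⊔ C) _ hb
      have hc' : MeasurableSet[A ⊔ B ⊔ C] c := (le_sup_right : C ≤ A ⊔ B ⊔ C) _ hc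
      exact (ha'.inter hb').inter hc'
  have hpi : IsPiSystem pSys := by
    rintro s ⟨a, b, c, ha, hb, hc, rfl⟩ t ⟨a', b', c', ha', hb', hc', rfl⟩ -
    exact ⟨a ∩ a', b ∩ b', c ∩ c', ha.inter ha', hb.inter hb', hc.inter hc', by
      ext x; simp only [Set.mem_inter_iff]; tauto⟩
  -- the basic computation on the π-system
  have Qbasic : ∀ t ∈ pSys,
      P[𝒾 t ∘ τ|B ⊔ C] =ᵐ[P] (P[𝒾 t|A ⊔ C]) ∘ τ := by
    rintro t ⟨a, b, c, ha, hb, hc, rfl⟩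
    set K : Ω → ℝ := fun _ => (P b).toReal with hK
    have ha' : MeasurableSet[B] (τ ⁻¹' a) := hpreA a ha
    have hb' : MeasurableSet[A] (τ ⁻¹' b) := hpreB b hb
    -- value of the conditional expectation of 𝒾 (τ ⁻¹' b) given B ⊔ C
    have hval1 : P[𝒾 (τ ⁻¹' b)|B ⊔ C] =ᵐ[P] K := by
      have h := condExp_indep_eq hA hBC
        (stronglyMeasurable_const.indicator hb' : StronglyMeasurable[A] (𝒾 (τ ⁻¹' b))) hIndepA
      refine h.trans ?_
      have : (∫ x, 𝒾 (τ ⁻¹' b) x ∂P) = (P b).toReal := by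
        rw [h𝒾]
        rw [integral_indicator (hA _ hb'), setIntegral_const, smul_eq_mul, mul_one, measureReal_def,
          hτpres.measure_preimage (hB _ hb).nullMeasurableSet]
      rw [this]
    have hval2 : P[𝒾 b|A ⊔ C] =ᵐ[P] K := by
      have h := condExp_indep_eq hB hAC
        (stronglyMeasurable_const.indicator hb : StronglyMeasurable[B] (𝒾 b)) hIndepB
      refine h.trans ?_
      have : (∫ x, 𝒾 b x ∂P) = (P b).toReal := by
        rw [h𝒾]
        rw [integral_indicator (hB _ hb), setIntegral_const, smul_eq_mul, mul_one, measureReal_def]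
      rw [this]
    -- LHS
    have hLHS : P[𝒾 (a ∩ b ∩ c) ∘ τ|B ⊔ C] =ᵐ[P] 𝒾 (τ ⁻¹' a) * 𝒾 c * K := by
      have e1 : 𝒾 (a ∩ b ∩ c) ∘ τ =ᵐ[P] (𝒾 (τ ⁻¹' a) * 𝒾 c) * 𝒾 (τ ⁻¹' b) := by
        rw [hcompind]
        have hsets : τ ⁻¹' (a ∩ b ∩ c) = (τ ⁻¹' a ∩ τ ⁻¹' b) ∩ τ ⁻¹' c := rfl
        rw [hsets, hprod, hprod]
        filter_upwards [hpreC c hc] with x hx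
        simp only [Pi.mul_apply]
        rw [hx]; ring
      have e2 : StronglyMeasurable[B ⊔ C] (𝒾 (τ ⁻¹' a) * 𝒾 c) :=
        (stronglyMeasurable_const.indicator ((le_sup_left : B ≤ B ⊔ C) _ ha')).mul
          (stronglyMeasurable_const.indicator ((le_sup_right : C ≤ B ⊔ C) _ hc))
      have e3 : Integrable (𝒾 (τ ⁻¹' b)) P := hIndInt _ (hA _ hb')
      have e4 : Integrable ((𝒾 (τ ⁻¹' a) * 𝒾 c) * 𝒾 (τ ⁻¹' b)) P := by
        rw [← hprod, ← hprod]
        exact hIndInt _ (((hB _ ha').inter (hC _ hc)).inter (hA _ hb'))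
      calc P[𝒾 (a ∩ b ∩ c) ∘ τ|B ⊔ C]
          =ᵐ[P] P[(𝒾 (τ ⁻¹' a) * 𝒾 c) * 𝒾 (τ ⁻¹' b)|B ⊔ C] := condExp_congr_ae e1
        _ =ᵐ[P] (𝒾 (τ ⁻¹' a) * 𝒾 c) * P[𝒾 (τ ⁻¹' b)|B ⊔ C] :=
            condExp_mul_of_stronglyMeasurable_left e2 e4 e3
        _ =ᵐ[P] 𝒾 (τ ⁻¹' a) * 𝒾 c * K := by
            filter_upwards [hval1] with x hx
            simp only [Pi.mul_apply]
            rw [hx]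
    -- RHS
    have hRHS0 : P[𝒾 (a ∩ b ∩ c)|A ⊔ C] =ᵐ[P] 𝒾 a * 𝒾 c * K := by
      have e1 : 𝒾 (a ∩ b ∩ c) = (𝒾 a * 𝒾 c) * 𝒾 b := by
        rw [hprod, hprod]; ring
      have e2 : StronglyMeasurable[A ⊔ C] (𝒾 a * 𝒾 c) :=
        (stronglyMeasurable_const.indicator ((le_sup_left : A ≤ A ⊔ C) _ ha)).mul
          (stronglyMeasurable_const.indicator ((le_sup_right : C ≤ A ⊔ C) _ hc))
      have e3 : Integrable (𝒾 b) P := hIndInt _ (hB _ hb)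
      have e4 : Integrable ((𝒾 a * 𝒾 c) * 𝒾 b) P := by
        rw [← hprod, ← hprod]
        exact hIndInt _ (((hA _ ha).inter (hC _ hc)).inter (hB _ hb))
      calc P[𝒾 (a ∩ b ∩ c)|A ⊔ C]
          =ᵐ[P] P[(𝒾 a * 𝒾 c) * 𝒾 b|A ⊔ C] := by rw [e1]
        _ =ᵐ[P] (𝒾 a * 𝒾 c) * P[𝒾 b|A ⊔ C] := condExp_mul_of_stronglyMeasurable_left e2 e4 e3
        _ =ᵐ[P] 𝒾 a * 𝒾 c * K := by
            filter_upwards [hval2] with x hx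
            simp only [Pi.mul_apply]
            rw [hx]
    have hRHS : (P[𝒾 (a ∩ b ∩ c)|A ⊔ C]) ∘ τ =ᵐ[P] 𝒾 (τ ⁻¹' a) * 𝒾 c * K := by
      refine (hcomp _ _ hRHS0).trans ?_
      have e5 : (𝒾 a * 𝒾 c * K) ∘ τ = 𝒾 (τ ⁻¹' a) * 𝒾 (τ ⁻¹' c) * K := by
        ext x
        simp only [Function.comp_apply, Pi.mul_apply]
        rw [← hcompind, ← hcompind]
        rfl
      rw [e5]
      filter_upwards [hpreC c hc] with x hx
      simp only [Pi.mul_apply]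
      rw [hx]
    exact hLHS.trans hRHS.symm
  -- extend to all measurable sets of A ⊔ B ⊔ C by the π-λ theorem
  have Qind : ∀ t : Set Ω, MeasurableSet[A ⊔ B ⊔ C] t →
      P[𝒾 t ∘ τ|B ⊔ C] =ᵐ[P] (P[𝒾 t|A ⊔ C]) ∘ τ := by
    have Qempty : P[𝒾 (∅ : Set Ω) ∘ τ|B ⊔ C] =ᵐ[P] (P[𝒾 (∅ : Set Ω)|A ⊔ C]) ∘ τ := by
      have : 𝒾 (∅ : Set Ω) = fun _ : Ω => (0 : ℝ) := by
        ext x; simp [h𝒾]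
      rw [this]
      exact Qconst 0
    have Qcompl : ∀ t : Set Ω, MeasurableSet[A ⊔ B ⊔ C] t →
        P[𝒾 t ∘ τ|B ⊔ C] =ᵐ[P] (P[𝒾 t|A ⊔ C]) ∘ τ →
        P[𝒾 tᶜ ∘ τ|B ⊔ C] =ᵐ[P] (P[𝒾 tᶜ|A ⊔ C]) ∘ τ := by
      intro t ht hQt
      have hind : 𝒾 tᶜ = (fun _ : Ω => (1 : ℝ)) - 𝒾 t := by
        ext x; by_cases hx : x ∈ t <;> simp [h𝒾, Set.indicator, hx]
      rw [hind]
      exact Qsub _ _ (integrable_const 1) (hIndInt t (hm' _ ht)) (Qconst 1) hQt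
    have Qunion : ∀ f : ℕ → Set Ω, Pairwise (Function.onFun Disjoint f) →
        (∀ i, MeasurableSet[A ⊔ B ⊔ C] (f i)) →
        (∀ i, P[𝒾 (f i) ∘ τ|B ⊔ C] =ᵐ[P] (P[𝒾 (f i)|A ⊔ C]) ∘ τ) →
        P[𝒾 (⋃ i, f i) ∘ τ|B ⊔ C] =ᵐ[P] (P[𝒾 (⋃ i, f i)|A ⊔ C]) ∘ τ := by
      intro f hdisj hfm hQf
      -- partial unions
      have hUn : ∀ n : ℕ, 𝒾 (⋃ i ∈ Finset.range n, f i) = ∑ i ∈ Finset.range n, 𝒾 (f i) := by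
        intro n
        rw [h𝒾]
        simp only []
        rw [Finset.indicator_biUnion (Finset.range n) f (hdisj.set_pairwise _)]
        ext x
        simp [Finset.sum_apply]
      have hQUn : ∀ n : ℕ, P[𝒾 (⋃ i ∈ Finset.range n, f i) ∘ τ|B ⊔ C]
          =ᵐ[P] (P[𝒾 (⋃ i ∈ Finset.range n, f i)|A ⊔ C]) ∘ τ := by
        intro n
        induction n with
        | zero =>
          have : (⋃ i ∈ Finset.range 0, f i) = (∅ : Set Ω) := by simp
          rw [this]; exact Qempty
        | succ n ih =>
          have hstep : 𝒾 (⋃ i ∈ Finset.range (n + 1), f i)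
              = 𝒾 (⋃ i ∈ Finset.range n, f i) + 𝒾 (f n) := by
            rw [hUn, hUn, Finset.sum_range_succ]
          rw [hstep]
          exact Qadd _ _
            (hIndInt _ (hm' _ ((Finset.range n).measurableSet_biUnion (fun i _ => hfm i))))
            (hIndInt _ (hm' _ (hfm n))) ih (hQf n)
      have hUmeas : MeasurableSet[m0] (⋃ i, f i) := hm' _ (MeasurableSet.iUnion hfm)
      have hInt : Integrable (𝒾 (⋃ i, f i)) P := hIndInt _ hUmeas
      have hIntn : ∀ n, Integrable (𝒾 (⋃ i ∈ Finset.range n, f i)) P := fun n =>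
        hIndInt _ (hm' _ ((Finset.range n).measurableSet_biUnion (fun i _ => hfm i)))
      refine Qlim _ (fun n => 𝒾 (⋃ i ∈ Finset.range n, f i)) hInt hIntn hQUn ?_
      -- L¹ convergence via dominated convergence
      have hmeasdiff : ∀ n : ℕ, Measurable[m0]
          (fun x => (‖𝒾 (⋃ i ∈ Finset.range n, f i) x - 𝒾 (⋃ i, f i) x‖₊ : ENNReal)) := by
        intro n
        have h1 : Measurable[m0] (𝒾 (⋃ i ∈ Finset.range n, f i)) :=
          measurable_const.indicator (hm' _ ((Finset.range n).measurableSet_biUnion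
            (fun i _ => hfm i)))
        have h2 : Measurable[m0] (𝒾 (⋃ i, f i)) := measurable_const.indicator hUmeas
        exact (h1.sub h2).nnnorm.coe_nnreal_ennreal
      have hbd : ∀ n : ℕ, (fun x => (‖𝒾 (⋃ i ∈ Finset.range n, f i) x
          - 𝒾 (⋃ i, f i) x‖₊ : ENNReal)) ≤ᵐ[P] fun _ => 1 := by
        intro n
        refine Filter.Eventually.of_forall fun x => ?_
        have hle : ‖𝒾 (⋃ i ∈ Finset.range n, f i) x - 𝒾 (⋃ i, f i) x‖ ≤ 1 := by
          rw [Real.norm_eq_abs]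
          rcases hind01 (⋃ i ∈ Finset.range n, f i) x with h1 | h1 <;>
            rcases hind01 (⋃ i, f i) x with h2 | h2 <;> rw [h1, h2] <;> norm_num
        calc (‖𝒾 (⋃ i ∈ Finset.range n, f i) x - 𝒾 (⋃ i, f i) x‖₊ : ENNReal)
            ≤ (1 : NNReal) := by
              exact_mod_cast ENNReal.coe_le_coe.mpr (by exact_mod_cast hle)
          _ = 1 := by simp
      have hptwise : ∀ x : Ω, Tendsto (fun n =>
          (‖𝒾 (⋃ i ∈ Finset.range n, f i) x - 𝒾 (⋃ i, f i) x‖₊ : ENNReal))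
          atTop (nhds 0) := by
        intro x
        refine tendsto_const_nhds.congr' ?_
        by_cases hx : x ∈ ⋃ i, f i
        · obtain ⟨j, hj⟩ := Set.mem_iUnion.mp hx
          filter_upwards [eventually_ge_atTop (j + 1)] with n hn
          have hx1 : x ∈ ⋃ i ∈ Finset.range n, f i :=
            Set.mem_iUnion₂.mpr ⟨j, Finset.mem_range.mpr (Nat.lt_of_lt_of_le (Nat.lt_succ_self j) hn), hj⟩
          have e1 : 𝒾 (⋃ i ∈ Finset.range n, f i) x = 1 := by
            simp only [h𝒾]; exact Set.indicator_of_mem hx1 _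
          have e2 : 𝒾 (⋃ i, f i) x = 1 := by
            simp only [h𝒾]; exact Set.indicator_of_mem hx _
          rw [e1, e2]
          simp
        · have hx1 : ∀ n, x ∉ ⋃ i ∈ Finset.range n, f i := by
            intro n hmem
            exact hx (Set.mem_iUnion.mpr (by
              obtain ⟨i, _, hi⟩ := Set.mem_iUnion₂.mp hmem
              exact ⟨i, hi⟩))
          filter_upwards with n
          have e1 : 𝒾 (⋃ i ∈ Finset.range n, f i) x = 0 := by
            simp only [h𝒾]; exact Set.indicator_of_notMem (hx1 n) _
          have e2 : 𝒾 (⋃ i, f i) x = 0 := by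
            simp only [h𝒾]; exact Set.indicator_of_notMem hx _
          rw [e1, e2]
          simp
      have hdom := tendsto_lintegral_of_dominated_convergence (μ := P)
        (fun _ => (1 : ENNReal)) hmeasdiff hbd
        (by simp)
        (Filter.Eventually.of_forall hptwise)
      have hzero : ∫⁻ _, (0 : ENNReal) ∂P = 0 := lintegral_zero
      rw [hzero] at hdom
      refine hdom.congr fun n => ?_
      rw [eLpNorm_one_eq_lintegral_enorm]
      rfl
    intro t ht
    letI : MeasurableSpace Ω := A ⊔ B ⊔ C
    exact MeasurableSpace.induction_on_inter (C := fun t _ => P[𝒾 t ∘ τ|B ⊔ C] =ᵐ[P] (P[𝒾 t|A ⊔ C]) ∘ τ)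
      hgen hpi Qempty Qbasic Qcompl Qunion t ht
  -- simple functions
  have hsimpleInt : ∀ g : @SimpleFunc Ω (A ⊔ B ⊔ C) ℝ, Integrable (⇑g) P := by
    intro g
    have hbg : ∃ Cb : ℝ, ∀ x, ‖g x‖ ≤ Cb := by
      letI : MeasurableSpace Ω := A ⊔ B ⊔ C
      exact g.exists_forall_norm_le
    obtain ⟨Cb, hCb⟩ := hbg
    exact memLp_one_iff_integrable.mp
      (MemLp.of_bound ((g.stronglyMeasurable.mono hm').aestronglyMeasurable) Cb
        (Filter.Eventually.of_forall hCb))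
  have Qsimple : ∀ g : @SimpleFunc Ω (A ⊔ B ⊔ C) ℝ,
      P[⇑g ∘ τ|B ⊔ C] =ᵐ[P] (P[⇑g|A ⊔ C]) ∘ τ := by
    intro g
    letI : MeasurableSpace Ω := A ⊔ B ⊔ C
    refine SimpleFunc.induction (motive := fun g : @SimpleFunc Ω (A ⊔ B ⊔ C) ℝ =>
      P[⇑g ∘ τ|B ⊔ C] =ᵐ[P] (P[⇑g|A ⊔ C]) ∘ τ) ?_ ?_ g
    · intro c s hs
      have hcoe : ⇑(SimpleFunc.piecewise s hs (SimpleFunc.const Ω c)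
          (SimpleFunc.const Ω (0 : ℝ))) = s.indicator (fun _ => c) := by
        ext x
        by_cases hx : x ∈ s <;>
          simp [SimpleFunc.coe_piecewise, SimpleFunc.coe_const, Set.piecewise, hx,
            Set.indicator, Function.const]
      rw [hcoe]
      have hsmul : s.indicator (fun _ : Ω => c) = c • 𝒾 s := by
        ext x; by_cases hx : x ∈ s <;> simp [h𝒾, Set.indicator, hx]
      rw [hsmul]
      exact Qsmul c (𝒾 s) (Qind s hs)
    · intro f g _ hQf hQg
      rw [SimpleFunc.coe_add]
      exact Qadd _ _ (hsimpleInt f) (hsimpleInt g) hQf hQg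
  -- approximation of θ by simple functions
  have hθsm : StronglyMeasurable[A ⊔ B ⊔ C] θ := hθmeas.stronglyMeasurable
  have hθtrim : Integrable θ (P.trim hm') := hθint.trim hm' hθsm
  obtain ⟨gs, hgs⟩ := exists_simple_approx_L1 (m := A ⊔ B ⊔ C) (P.trim hm') θ hθmeas hθtrim
  refine Qlim θ (fun n => ⇑(gs n)) hθint (fun n => hsimpleInt (gs n))
    (fun n => Qsimple (gs n)) ?_
  refine hgs.congr fun n => ?_
  exact eLpNorm_trim hm' ((gs n).stronglyMeasurable.sub hθsm)
end

section
/- L¹ contraction step in the proof of Lemma 3.2: Let (Ω, F, P) be a probability space and A, B, C sub-σ-algebras of F such that the triple (A, B, C) is independent under P. Let τ : Ω → Ω be measurable and measure preserving (P ∘ τ⁻¹ = P) such that: f ∘ τ is B-measurable for every bounded A-measurable f : Ω → ℝ; f ∘ τ is A-measurable for every bounded B-measurable f; and f ∘ τ = f P-a.s. for every bounded C-measurable f. If ζ : Ω → ℝ is P-integrable, measurable with respect to A ∨ B ∨ C, and satisfies ζ ∘ τ = ζ P-a.s., then E[ |E[ζ | A] − E[ζ]| ] ≤ E[ |E[ζ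 | B ∨ C] − E[ζ]| ]. -/
open MeasureTheory ProbabilityTheory

private lemma integral_comp_mp {Ω : Type*} [MeasurableSpace Ω] {P : Measure Ω}
    {τ : Ω → Ω} (hτm : Measurable τ) (hτ : MeasurePreserving τ P P)
    {f : Ω → ℝ} (hf : AEStronglyMeasurable f P) :
    ∫ x, f (τ x) ∂P = ∫ x, f x ∂P := by
  calc ∫ x, f (τ x) ∂P = ∫ y, f y ∂(Measure.map τ P) :=
        (integral_map hτm.aemeasurable (by rwa [hτ.map_eq])).symm
    _ = ∫ x, f x ∂P := by rw [hτ.map_eq]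

private lemma setIntegral_comp_mp {Ω : Type*} [MeasurableSpace Ω] {P : Measure Ω}
    {τ : Ω → Ω} (hτm : Measurable τ) (hτ : MeasurePreserving τ P P)
    {f : Ω → ℝ} (hf : AEStronglyMeasurable f P) {t : Set Ω} (ht : MeasurableSet t) :
    ∫ x in τ ⁻¹' t, f (τ x) ∂P = ∫ x in t, f x ∂P := by
  calc ∫ x in τ ⁻¹' t, f (τ x) ∂P = ∫ y in t, f y ∂(Measure.map τ P) :=
        (setIntegral_map ht (by rwa [hτ.map_eq]) hτm.aemeasurable).symm
    _ = ∫ x in t, f x ∂P := by rw [hτ.map_eq]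

private lemma integrable_comp_mp {Ω : Type*} [MeasurableSpace Ω] {P : Measure Ω}
    {τ : Ω → Ω} (hτ : MeasurePreserving τ P P)
    {f : Ω → ℝ} (hf : Integrable f P) : Integrable (f ∘ τ) P :=
  (hτ.integrable_comp hf.aestronglyMeasurable).mpr hf

private lemma setIntegral_congr_ae' {Ω : Type*} [MeasurableSpace Ω] {P : Measure Ω}
    {f g : Ω → ℝ} {s : Set Ω} (hs : MeasurableSet s)
    (h : ∀ᵐ x ∂P, x ∈ s → f x = g x) :
    ∫ x in s, f x ∂P = ∫ x in s, g x ∂P :=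
  setIntegral_congr_ae hs h

/-- L¹ contraction step in the proof of Lemma 3.2: under the swapping
measure-preserving transformation `τ`, an integrable `A ∨ B ∨ C`-measurable
invariant random variable `ζ` satisfies
`E[|E[ζ|A] − E[ζ]|] ≤ E[|E[ζ|B ∨ C] − E[ζ]|]`. -/
theorem l1_contraction_step
    {Ω : Type*} [m0 : MeasurableSpace Ω] (P : Measure Ω) [IsProbabilityMeasure P]
    (A B C : MeasurableSpace Ω)
    (hA : A ≤ m0) (hB : B ≤ m0) (hC : C ≤ m0)
    (hindep : iIndep ![A, B, C] P)
    (τ : Ω → Ω) (hτmeas : @Measurable Ω Ω m0 m0 τ)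
    (hτpres : @MeasurePreserving Ω Ω m0 m0 τ P P)
    (hAB : ∀ f : Ω → ℝ, (∃ M, ∀ ω, |f ω| ≤ M) → Measurable[A] f →
      Measurable[B] (f ∘ τ))
    (hBA : ∀ f : Ω → ℝ, (∃ M, ∀ ω, |f ω| ≤ M) → Measurable[B] f →
      Measurable[A] (f ∘ τ))
    (hCfix : ∀ f : Ω → ℝ, (∃ M, ∀ ω, |f ω| ≤ M) → Measurable[C] f →
      f ∘ τ =ᵐ[P] f)
    (ζ : Ω → ℝ) (hζint : Integrable ζ P) (hζmeas : Measurable[A ⊔ B ⊔ C] ζ)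
    (hζinv : ζ ∘ τ =ᵐ[P] ζ) :
    ∫ ω, |(P[ζ|A]) ω - ∫ x, ζ x ∂P| ∂P
      ≤ ∫ ω, |(P[ζ|B ⊔ C]) ω - ∫ x, ζ x ∂P| ∂P := by
  classical
  set c : ℝ := ∫ x, ζ x ∂P with hc
  set h : Ω → ℝ := P[ζ|A] with hh
  set g : Ω → ℝ := P[ζ|B ⊔ C] with hg
  -- comap τ A ≤ B via the indicator trick
  have hm'B : MeasurableSpace.comap τ A ≤ B := by
    rintro s ⟨t, ht, rfl⟩
    have hf : Measurable[B] ((t.indicator (fun _ => (1 : ℝ))) ∘ τ) :=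
      hAB _ ⟨1, fun ω => by
        simp only [Set.indicator_apply]; split_ifs <;> simp⟩
        (measurable_const.indicator ht)
    have hset : τ ⁻¹' t = ((t.indicator (fun _ => (1 : ℝ))) ∘ τ) ⁻¹' {1} := by
      ext ω
      simp only [Set.mem_preimage, Function.comp_apply, Set.indicator_apply,
        Set.mem_singleton_iff]
      split_ifs with hmem <;> simp [hmem]
    rw [hset]
    exact hf (measurableSet_singleton 1)
  have hm' : MeasurableSpace.comap τ A ≤ m0 := hm'B.trans hB
  have hBC : B ⊔ C ≤ m0 := sup_le hB hC
  have hm'BC : MeasurableSpace.comap τ A ≤ B ⊔ C := hm'B.trans le_sup_left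
  haveI : SigmaFinite (P.trim hm') := by infer_instance
  haveI : SigmaFinite (P.trim hA) := by infer_instance
  haveI : SigmaFinite (P.trim hBC) := by infer_instance
  -- h is strongly measurable wrt A, hence measurable wrt m0
  have hhsm : StronglyMeasurable[A] h := stronglyMeasurable_condExp
  have hhm0 : AEStronglyMeasurable[m0] h P := (hhsm.mono hA).aestronglyMeasurable
  have hτm' : @Measurable Ω Ω (MeasurableSpace.comap τ A) A τ :=
    Measurable.of_comap_le le_rfl
  -- key step: h ∘ τ is a version of P[ζ | comap τ A]
  have hkey : h ∘ τ =ᵐ[P] P[ζ|MeasurableSpace.comap τ A] := by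
    refine ae_eq_condExp_of_forall_setIntegral_eq hm' hζint ?_ ?_ ?_
    · intro s _ _
      exact (@integrable_comp_mp Ω m0 P τ hτpres h integrable_condExp).restrict
    · rintro s ⟨t, ht, rfl⟩ _
      have htm0 : MeasurableSet[m0] t := hA t ht
      have e1 : ∫ x in τ ⁻¹' t, (h ∘ τ) x ∂P = ∫ x in t, h x ∂P :=
        @setIntegral_comp_mp Ω m0 P τ hτmeas hτpres h hhm0 t htm0
      have e2 : ∫ x in t, h x ∂P = ∫ x in t, ζ x ∂P :=
        setIntegral_condExp hA hζint ht
      have e3 : ∫ x in t, ζ x ∂P = ∫ x in τ ⁻¹' t, (ζ ∘ τ) x ∂P :=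
        (@setIntegral_comp_mp Ω m0 P τ hτmeas hτpres ζ hζint.aestronglyMeasurable
          t htm0).symm
      have e4 : ∫ x in τ ⁻¹' t, (ζ ∘ τ) x ∂P = ∫ x in τ ⁻¹' t, ζ x ∂P :=
        @setIntegral_congr_ae' Ω m0 P (ζ ∘ τ) ζ (τ ⁻¹' t) (hτmeas htm0)
          (hζinv.mono fun ω hω _ => hω)
      rw [e1, e2, e3, e4]
    · exact StronglyMeasurable.aestronglyMeasurable
        (hhsm.comp_measurable hτm')
  -- tower property
  have htower : P[g|MeasurableSpace.comap τ A] =ᵐ[P]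
      P[ζ|MeasurableSpace.comap τ A] := condExp_condExp_of_le hm'BC hBC
  -- LHS = ∫ |h∘τ - c|
  have hLHS : ∫ ω, |h ω - c| ∂P = ∫ ω, |(h ∘ τ) ω - c| ∂P :=
    (@integral_comp_mp Ω m0 P τ hτmeas hτpres (fun ω => |h ω - c|)
      ((hhm0.sub aestronglyMeasurable_const).norm)).symm
  have hint_g : Integrable g P := integrable_condExp
  -- P[g - c | comap τ A] = P[g|comap τ A] - c
  have hsub : P[g - (fun _ => c)|MeasurableSpace.comap τ A] =ᵐ[P]
      fun ω => (P[g|MeasurableSpace.comap τ A]) ω - c := by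
    have h2 : P[fun _ : Ω => c|MeasurableSpace.comap τ A] = fun _ => c :=
      condExp_const hm' c
    filter_upwards [condExp_sub (m := MeasurableSpace.comap τ A) (μ := P)
      hint_g (integrable_const c)] with ω hω
    rw [hω, Pi.sub_apply, h2]
  calc ∫ ω, |h ω - c| ∂P = ∫ ω, |(h ∘ τ) ω - c| ∂P := hLHS
    _ = ∫ ω, |(P[g - (fun _ => c)|MeasurableSpace.comap τ A]) ω| ∂P := by
        refine integral_congr_ae ?_
        filter_upwards [hkey, htower, hsub] with ω h1 h2 h3
        rw [h1, ← h2, h3]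
    _ ≤ ∫ ω, |g ω - c| ∂P := by
        exact integral_abs_condExp_le
          (m := MeasurableSpace.comap τ A) (μ := P) (g - fun _ => c)
end

section
/- Hessian bound for ψ (used in the proof of Lemma 5.2): There exists a constant C > 0 such that the function ψ(x) := (log((|x|²+1)^{1/2}) + 1)² on ℝⁿ satisfies ‖D²ψ(x)‖ ≤ C (1 + ψ(x)^{1/2}) / (|x|²+1) for every x ∈ ℝⁿ, where D²ψ(x) denotes the second derivative (Hessian) of ψ at x and ‖·‖ its operator norm. -/
open Set

noncomputable section

/-- The state space `ℝⁿ`. -/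
abbrev Vec (n : ℕ) := EuclideanSpace ℝ (Fin n)

/-- `ψ(x) = (log((|x|²+1)^{1/2}) + 1)²`. -/
def psi {n : ℕ} (x : Vec n) : ℝ := (Real.log (Real.sqrt (‖x‖ ^ 2 + 1)) + 1) ^ 2

set_option maxHeartbeats 1000000
set_option synthInstance.maxHeartbeats 400000

def aa (s : ℝ) : ℝ := Real.log (s + 1) / 2 + 1
def phi' (s : ℝ) : ℝ := aa s / (s + 1)
def phi'' (s : ℝ) : ℝ := (1/2 - aa s) / (s + 1) ^ 2

lemma hasDerivAt_aa {s : ℝ} (hs : 0 ≤ s) : HasDerivAt aa (1 / (2 * (s + 1))) s := by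
  have h1 : (0:ℝ) < s + 1 := by linarith
  have : HasDerivAt (fun t : ℝ => Real.log (t + 1)) ((s+1)⁻¹ * 1) s :=
    (Real.hasDerivAt_log h1.ne').comp (h₂ := Real.log) s ((hasDerivAt_id s).add_const 1)
  have := (this.div_const 2).add_const 1
  refine this.congr_deriv ?_
  field_simp

lemma hasDerivAt_sq_aa {s : ℝ} (hs : 0 ≤ s) : HasDerivAt (fun t => aa t ^ 2) (phi' s) s := by
  have h1 : (0:ℝ) < s + 1 := by linarith
  have := (hasDerivAt_aa hs).pow 2
  refine this.congr_deriv ?_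
  unfold phi'
  field_simp
  ring

lemma hasDerivAt_phi' {s : ℝ} (hs : 0 ≤ s) : HasDerivAt phi' (phi'' s) s := by
  have h1 : (0:ℝ) < s + 1 := by linarith
  have := (hasDerivAt_aa hs).div ((hasDerivAt_id s).add_const 1) h1.ne'
  refine this.congr_deriv ?_
  unfold phi''
  simp only [id]
  field_simp

lemma final_ineq (s L : ℝ) (hs : 0 ≤ s) (hL : 0 ≤ L) :
    2 * ((L / 2 + 1) / (s + 1)) + 4 * (L / 2 + 1 - 1 / 2) / (s + 1) ^ 2 * s
      ≤ 6 * (1 + (L / 2 + 1)) / (s + 1) := by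
  have h1 : (0:ℝ) < s + 1 := by linarith
  have e1 : 2 * ((L / 2 + 1) / (s + 1)) = (L + 2) * (s + 1) / (s + 1) ^ 2 := by
    field_simp
  have e2 : 4 * (L / 2 + 1 - 1 / 2) / (s + 1) ^ 2 * s = (2 * L + 2) * s / (s + 1) ^ 2 := by
    field_simp; ring
  have e3 : 6 * (1 + (L / 2 + 1)) / (s + 1) = (3 * L + 12) * (s + 1) / (s + 1) ^ 2 := by
    field_simp; ring
  rw [e1, e2, e3, ← add_div, div_le_div_iff₀ (by positivity) (by positivity)]
  nlinarith [mul_nonneg hL hs, sq_nonneg (s + 1)]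

def D1 {n : ℕ} (y : Vec n) : Vec n →L[ℝ] ℝ := (2 * phi' (‖y‖ ^ 2)) • (innerSL ℝ) y

lemma psi_eq {n : ℕ} : (psi : Vec n → ℝ) = fun y => aa (‖y‖ ^ 2) ^ 2 := by
  funext y
  unfold psi aa
  rw [Real.log_sqrt (by positivity)]

lemma hasFDerivAt_normsq {n : ℕ} (y : Vec n) :
    HasFDerivAt (fun z : Vec n => ‖z‖ ^ 2) (2 • (innerSL ℝ) y) y :=
  (hasStrictFDerivAt_norm_sq y).hasFDerivAt

lemma hasFDerivAt_psi {n : ℕ} (y : Vec n) : HasFDerivAt (psi : Vec n → ℝ) (D1 y) y := by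
  rw [psi_eq]
  have h := (hasDerivAt_sq_aa (s := ‖y‖^2) (by positivity)).comp_hasFDerivAt y (hasFDerivAt_normsq y)
  refine h.congr_fderiv ?_
  unfold D1
  ext v
  simp [phi']
  ring

/-- Hessian bound for `ψ`: there is `C > 0` with
`‖D²ψ(x)‖ ≤ C (1 + ψ(x)^{1/2}) / (|x|²+1)` for every `x`. -/
theorem psi_hessian_bound (n : ℕ) :
    ∃ C : ℝ, 0 < C ∧ ∀ x : Vec n,
      ‖fderiv ℝ (fun y : Vec n => fderiv ℝ (fun z : Vec n => psi z) y) x‖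
        ≤ C * (1 + Real.sqrt (psi x)) / (‖x‖ ^ 2 + 1) := by
  refine ⟨6, by norm_num, fun x => ?_⟩
  have hfd : (fun y : Vec n => fderiv ℝ (fun z : Vec n => psi z) y) = D1 := by
    funext y
    exact (hasFDerivAt_psi y).fderiv
  rw [hfd]
  have hs0 : (0:ℝ) ≤ ‖x‖ ^ 2 := by positivity
  have h1 : (0:ℝ) < ‖x‖ ^ 2 + 1 := by linarith
  have hc : HasFDerivAt (fun y : Vec n => 2 * phi' (‖y‖ ^ 2))
      ((4 * phi'' (‖x‖ ^ 2)) • (innerSL ℝ) x) x := by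
    have h := ((hasDerivAt_phi' (s := ‖x‖^2) (by positivity)).const_mul 2).comp_hasFDerivAt x
      (hasFDerivAt_normsq x)
    refine h.congr_fderiv ?_
    ext v
    simp
    ring
  have hD := hc.smul (ContinuousLinearMap.hasFDerivAt (innerSL ℝ (E := Vec n)))
  have hfd2 : fderiv ℝ (D1 : Vec n → _) x = _ := hD.fderiv
  rw [hfd2]
  set s := ‖x‖ ^ 2 with hs
  have hL : 0 ≤ Real.log (s + 1) := Real.log_nonneg (by linarith)
  have haa : 1 ≤ aa s := by unfold aa; linarith
  have hpsi : Real.sqrt (psi x) = aa s := by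
    rw [psi_eq, Real.sqrt_sq (by linarith)]
  have hphi0 : 0 ≤ 2 * phi' s := by unfold phi'; positivity
  have habs : |4 * phi'' s| = 4 * (aa s - 1/2) / (s+1)^2 := by
    unfold phi''
    rw [abs_of_nonpos (by
      apply mul_nonpos_of_nonneg_of_nonpos (by norm_num)
      apply div_nonpos_of_nonpos_of_nonneg (by linarith) (by positivity))]
    ring
  have hxx : ‖x‖ * ‖x‖ = s := by rw [hs]; ring
  refine le_trans (norm_add_le (E := Vec n →L[ℝ] Vec n →L[ℝ] ℝ) _ _) ?_
  rw [ContinuousLinearMap.norm_smulRight_apply, norm_smul (4 * phi'' s), innerSL_apply_norm]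
  refine le_trans (add_le_add (ContinuousLinearMap.opNorm_smul_le (2 * phi' s) (innerSL ℝ))
    le_rfl) ?_
  refine le_trans (add_le_add (mul_le_mul_of_nonneg_left (norm_innerSL_le ℝ) (norm_nonneg _)) le_rfl) ?_
  rw [mul_one, Real.norm_eq_abs, Real.norm_eq_abs, abs_of_nonneg hphi0, habs, mul_assoc, hxx,
    hpsi]
  unfold phi' aa
  exact final_ineq s (Real.log (s + 1)) hs0 hL

end
end

section
/- Derivative bounds for χ, uniform in C₁ (used in the proof of Lemma 5.2): Let T > 0, Ã > 0 and C₁ > 0, and set t₁ := max(T − Ã/C₁, 0). There exists a constant C > 0 depending only on Ã and the dimension n (in particular independent of C₁) such that for all t ∈ [t₁, T] and all x ∈ ℝⁿ: |Dχ(t,x)| ≤ C χ(t,x) ψ(x)^{1/2} / (|x|²+1)^{1/2} and ‖D²χ(t,x)‖ ≤ C χ(t,x) ψ(x) / (|x|²+1), where Dχ and D²χ denote the gradient and the Hessian of χ in the variable x and ‖·‖ the operator norm. -/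
open Set

noncomputable section

/-- `χ(t,x) = exp((C₁(T−t) + Ã) ψ(x))`. -/
def chi {n : ℕ} (T A C₁ : ℝ) (t : ℝ) (x : Vec n) : ℝ :=
  Real.exp ((C₁ * (T - t) + A) * psi x)

/-- 1D profile `L(r) = log(r+1)/2 + 1`. -/
def Lf (r : ℝ) : ℝ := Real.log (r + 1) / 2 + 1

/-- 1D profile `F(a,r) = exp(a L(r)²)`. -/
def Ff (a r : ℝ) : ℝ := Real.exp (a * (Lf r) ^ 2)

/-- 1D profile for the gradient coefficient. -/
def Hf (a r : ℝ) : ℝ := 2 * a * Ff a r * Lf r / (r + 1)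

lemma psi_eq_s11 {n : ℕ} (x : Vec n) : psi x = (Lf (‖x‖ ^ 2)) ^ 2 := by
  have h : (0:ℝ) ≤ ‖x‖ ^ 2 + 1 := by positivity
  simp [psi, Lf, Real.log_sqrt h]

lemma chi_eq {n : ℕ} (T A C₁ t : ℝ) (x : Vec n) :
    chi T A C₁ t x = Ff (C₁ * (T - t) + A) (‖x‖ ^ 2) := by
  simp [chi, Ff, psi_eq_s11]

lemma hasDerivAt_Lf {r : ℝ} (hr : 0 ≤ r) :
    HasDerivAt Lf (1 / (2 * (r + 1))) r := by
  have h1 : HasDerivAt (fun s : ℝ => s + 1) 1 r := (hasDerivAt_id r).add_const 1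
  have hne : r + 1 ≠ 0 := by linarith
  have h2 : HasDerivAt (fun s : ℝ => Real.log (s + 1)) ((r + 1)⁻¹ * 1) r :=
    by have := (Real.hasDerivAt_log hne).comp r h1; exact this
  have h3 := (h2.div_const 2).add_const 1
  refine h3.congr_deriv ?_
  field_simp

lemma hasDerivAt_Ff {a r : ℝ} (hr : 0 ≤ r) :
    HasDerivAt (Ff a) (a * Lf r / (r + 1) * Ff a r) r := by
  have hne : r + 1 ≠ 0 := by linarith
  have h1 : HasDerivAt (fun s : ℝ => a * (Lf s) ^ 2)
      (a * (2 * Lf r ^ 1 * (1 / (2 * (r + 1))))) r :=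
    (((hasDerivAt_Lf hr).pow 2)).const_mul a
  have h2 := h1.exp
  refine h2.congr_deriv ?_
  rw [Ff]
  field_simp

lemma hasDerivAt_Hf {a r : ℝ} (hr : 0 ≤ r) :
    HasDerivAt (Hf a)
      (2 * a * Ff a r * (a * (Lf r) ^ 2 + 1 / 2 - Lf r) / (r + 1) ^ 2) r := by
  have hne : r + 1 ≠ 0 := by linarith
  have hN : HasDerivAt (fun s : ℝ => 2 * a * Ff a s * Lf s)
      (2 * a * (a * Lf r / (r + 1) * Ff a r) * Lf r
        + 2 * a * Ff a r * (1 / (2 * (r + 1)))) r := by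
    have h := (((hasDerivAt_Ff (a := a) hr).const_mul (2 * a)).mul (hasDerivAt_Lf hr))
    exact h
  have hD : HasDerivAt (fun s : ℝ => s + 1) 1 r := (hasDerivAt_id r).add_const 1
  have h := hN.div hD hne
  have heq : ((fun s : ℝ => 2 * a * Ff a s * Lf s) / (fun s : ℝ => s + 1)) = Hf a := rfl
  rw [heq] at h
  refine h.congr_deriv ?_
  field_simp

lemma hasFDerivAt_chi {n : ℕ} (T A C₁ t : ℝ) (x : Vec n) :
    HasFDerivAt (fun y : Vec n => chi T A C₁ t y)
      ((Hf (C₁ * (T - t) + A) (‖x‖ ^ 2)) • innerSL ℝ x) x := by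
  set a := C₁ * (T - t) + A
  have hr : (0:ℝ) ≤ ‖x‖ ^ 2 := by positivity
  have h1 : HasFDerivAt (fun y : Vec n => ‖y‖ ^ 2) (2 • innerSL ℝ x) x :=
    (hasStrictFDerivAt_norm_sq x).hasFDerivAt
  have h2 := (hasDerivAt_Ff (a := a) hr).comp_hasFDerivAt x h1
  have heq : (fun y : Vec n => chi T A C₁ t y) = fun y : Vec n => Ff a (‖y‖ ^ 2) := by
    funext y; exact chi_eq T A C₁ t y
  rw [heq]
  refine h2.congr_fderiv ?_
  ext y
  have hne : (‖x‖:ℝ) ^ 2 + 1 ≠ 0 := by positivity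
  simp [Hf, ContinuousLinearMap.smul_apply, smul_eq_mul]
  field_simp

/-- The inner-product pairing as a genuinely ℝ-linear continuous map. -/
def innerB (n : ℕ) : Vec n →L[ℝ] Vec n →L[ℝ] ℝ := innerSL ℝ

@[simp] lemma innerB_apply {n : ℕ} (y z : Vec n) : innerB n y z = inner ℝ y z := rfl

lemma norm_smul_innerSL_le {n : ℕ} (c : ℝ) (hc : 0 ≤ c) (x : Vec n) :
    ‖c • innerSL ℝ x‖ ≤ c * ‖x‖ := by
  apply ContinuousLinearMap.opNorm_le_bound _ (mul_nonneg hc (norm_nonneg x))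
  intro z
  rw [ContinuousLinearMap.smul_apply, smul_eq_mul, Real.norm_eq_abs, abs_mul,
    abs_of_nonneg hc, innerSL_apply_apply, mul_assoc]
  exact mul_le_mul_of_nonneg_left (abs_real_inner_le_norm x z) hc

lemma norm_secondDeriv_le {n : ℕ} (c d : ℝ) (hc : 0 ≤ c) (x : Vec n) :
    ‖c • innerB n + ((d • innerSL ℝ x).smulRight (innerSL ℝ x))‖
      ≤ c + |d| * (‖x‖ * ‖x‖) := by
  have hK : 0 ≤ c + |d| * (‖x‖ * ‖x‖) := by positivity
  apply ContinuousLinearMap.opNorm_le_bound _ hK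
  intro y
  apply ContinuousLinearMap.opNorm_le_bound _ (mul_nonneg hK (norm_nonneg y))
  intro z
  simp only [ContinuousLinearMap.add_apply, ContinuousLinearMap.smul_apply,
    ContinuousLinearMap.smulRight_apply, smul_eq_mul, Real.norm_eq_abs, innerSL_apply_apply,
    innerB_apply]
  have i1 := abs_real_inner_le_norm y z
  have i2 := abs_real_inner_le_norm x y
  have i3 := abs_real_inner_le_norm x z
  refine (abs_add_le _ _).trans ?_
  rw [abs_mul, abs_of_nonneg hc, abs_mul, abs_mul]
  nlinarith [abs_nonneg (inner ℝ x y : ℝ), abs_nonneg (inner ℝ x z : ℝ), abs_nonneg d,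
    norm_nonneg x, norm_nonneg y, norm_nonneg z,
    mul_le_mul_of_nonneg_left (mul_le_mul i2 i3 (abs_nonneg _) (by positivity))
      (abs_nonneg d),
    mul_le_mul_of_nonneg_left i1 hc]

lemma scalar_bound1 (A a u F L : ℝ) (hA : 0 < A) (haA : A ≤ a) (ha2A : a ≤ 2 * A)
    (hu : 0 ≤ u) (hL1 : 1 ≤ L) (hF : 0 < F) :
    2 * a * F * L / (u ^ 2 + 1) * u
      ≤ 20 * (A + 1) ^ 2 * F * L / Real.sqrt (u ^ 2 + 1) := by
  have hg : (0:ℝ) < u ^ 2 + 1 := by positivity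
  have hs0 : 0 < Real.sqrt (u ^ 2 + 1) := Real.sqrt_pos.mpr hg
  have hss : Real.sqrt (u ^ 2 + 1) * Real.sqrt (u ^ 2 + 1) = u ^ 2 + 1 :=
    Real.mul_self_sqrt hg.le
  have hus : u ≤ Real.sqrt (u ^ 2 + 1) := by
    calc u = Real.sqrt (u ^ 2) := (Real.sqrt_sq hu).symm
    _ ≤ _ := Real.sqrt_le_sqrt (by linarith)
  have ha0 : 0 < a := lt_of_lt_of_le hA haA
  have hL0 : (0:ℝ) < L := by linarith
  rw [div_mul_eq_mul_div, div_le_div_iff₀ hg hs0]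
  have hu' : u * Real.sqrt (u ^ 2 + 1) ≤ u ^ 2 + 1 := by nlinarith
  calc 2 * a * F * L * u * Real.sqrt (u ^ 2 + 1)
      = (2 * a * F * L) * (u * Real.sqrt (u ^ 2 + 1)) := by ring
    _ ≤ (2 * a * F * L) * (u ^ 2 + 1) := by
        apply mul_le_mul_of_nonneg_left hu'
          (mul_nonneg (mul_nonneg (by linarith) hF.le) hL0.le)
    _ ≤ 20 * (A + 1) ^ 2 * F * L * (u ^ 2 + 1) := by
        nlinarith [mul_le_mul_of_nonneg_right
          (show 2 * a ≤ 20 * (A + 1) ^ 2 by nlinarith)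
          (mul_nonneg (mul_nonneg hF.le hL0.le) hg.le)]

lemma scalar_bound2 (A a u F L M : ℝ) (hA : 0 < A) (haA : A ≤ a) (ha2A : a ≤ 2 * A)
    (hu : 0 ≤ u) (hL1 : 1 ≤ L) (hF : 0 < F)
    (hM : |M| ≤ (a + 3 / 2) * L ^ 2) :
    2 * a * F * L / (u ^ 2 + 1)
      + |2 * (2 * a * F * M / (u ^ 2 + 1) ^ 2)| * (u * u)
      ≤ 20 * (A + 1) ^ 2 * F * L ^ 2 / (u ^ 2 + 1) := by
  have hg : (0:ℝ) < u ^ 2 + 1 := by positivity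
  have ha0 : 0 < a := lt_of_lt_of_le hA haA
  have hL0 : (0:ℝ) < L := by linarith
  have habs : |2 * (2 * a * F * M / (u ^ 2 + 1) ^ 2)|
      = 2 * (2 * a * F * |M| / (u ^ 2 + 1) ^ 2) := by
    simp only [abs_mul, abs_div, abs_two, abs_of_pos ha0, abs_of_pos hF, abs_pow,
      abs_of_pos hg]
  rw [habs]
  have ht1 : 2 * a * F * L / (u ^ 2 + 1) ≤ 4 * A * (F * L ^ 2) / (u ^ 2 + 1) := by
    gcongr ?_ / _
    nlinarith [mul_nonneg (mul_nonneg (sub_nonneg.2 ha2A) hF.le) hL0.le,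
      mul_nonneg (mul_nonneg (mul_nonneg (by linarith : (0:ℝ) ≤ 4 * A) hF.le) hL0.le)
        (by linarith : (0:ℝ) ≤ L - 1)]
  have hr1 : (u * u) / (u ^ 2 + 1) ^ 2 ≤ 1 / (u ^ 2 + 1) := by
    rw [div_le_div_iff₀ (by positivity) hg]; nlinarith
  have ht2 : 2 * (2 * a * F * |M| / (u ^ 2 + 1) ^ 2) * (u * u)
      ≤ 4 * a * (a + 3 / 2) * (F * L ^ 2) * (1 / (u ^ 2 + 1)) := by
    rw [show 2 * (2 * a * F * |M| / (u ^ 2 + 1) ^ 2) * (u * u)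
        = (4 * a * F * |M|) * ((u * u) / (u ^ 2 + 1) ^ 2) by ring]
    apply mul_le_mul _ hr1 (by positivity)
      (mul_nonneg (mul_nonneg (by linarith) (by linarith))
        (mul_nonneg hF.le (sq_nonneg L)))
    nlinarith [mul_le_mul_of_nonneg_left hM
      (mul_nonneg (by linarith : (0:ℝ) ≤ 4 * a) hF.le)]
  have hcoef : 4 * A + 4 * a * (a + 3 / 2) ≤ 20 * (A + 1) ^ 2 := by nlinarith
  have hsum : 4 * A * (F * L ^ 2) / (u ^ 2 + 1)
        + 4 * a * (a + 3 / 2) * (F * L ^ 2) * (1 / (u ^ 2 + 1))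
      ≤ 20 * (A + 1) ^ 2 * F * L ^ 2 / (u ^ 2 + 1) := by
    rw [show 4 * a * (a + 3 / 2) * (F * L ^ 2) * (1 / (u ^ 2 + 1))
        = 4 * a * (a + 3 / 2) * (F * L ^ 2) / (u ^ 2 + 1) by ring, ← add_div]
    gcongr ?_ / _
    nlinarith [mul_le_mul_of_nonneg_right hcoef (mul_nonneg hF.le (sq_nonneg L))]
  linarith

/-- Derivative bounds for `χ`, uniform in `C₁`: for every `Ã > 0` there is a
constant `C > 0` (depending only on `Ã` and the dimension) such that, for all
`T > 0`, `C₁ > 0`, `t ∈ [max(T − Ã/C₁, 0), T]` and `x ∈ ℝⁿ`,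
`|Dχ(t,x)| ≤ C χ(t,x) ψ(x)^{1/2}/(|x|²+1)^{1/2}` and
`‖D²χ(t,x)‖ ≤ C χ(t,x) ψ(x)/(|x|²+1)`. -/
theorem chi_derivative_bounds (n : ℕ) :
    ∀ A : ℝ, 0 < A → ∃ C : ℝ, 0 < C ∧
      ∀ T : ℝ, 0 < T → ∀ C₁ : ℝ, 0 < C₁ →
        ∀ t ∈ Icc (max (T - A / C₁) 0) T, ∀ x : Vec n,
          ‖fderiv ℝ (fun y : Vec n => chi T A C₁ t y) x‖
              ≤ C * chi T A C₁ t x * Real.sqrt (psi x) / Real.sqrt (‖x‖ ^ 2 + 1) ∧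
          ‖fderiv ℝ (fun y : Vec n => fderiv ℝ (fun z : Vec n => chi T A C₁ t z) y) x‖
              ≤ C * chi T A C₁ t x * psi x / (‖x‖ ^ 2 + 1) := by
  intro A hA
  refine ⟨20 * (A + 1) ^ 2, by positivity, ?_⟩
  intro T hT C₁ hC₁ t ht x
  have ht1 : T - A / C₁ ≤ t := le_trans (le_max_left _ _) ht.1
  have ht2 : t ≤ T := ht.2
  have haA : A ≤ C₁ * (T - t) + A := by
    nlinarith [mul_nonneg hC₁.le (sub_nonneg.2 ht2)]
  have ha2A : C₁ * (T - t) + A ≤ 2 * A := by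
    have h1 : C₁ * (T - t) ≤ C₁ * (A / C₁) :=
      mul_le_mul_of_nonneg_left (by linarith) hC₁.le
    rw [mul_div_cancel₀ _ hC₁.ne'] at h1
    linarith
  have ha0 : 0 < C₁ * (T - t) + A := lt_of_lt_of_le hA haA
  have hL1 : 1 ≤ Lf (‖x‖ ^ 2) := by
    have : 0 ≤ Real.log (‖x‖ ^ 2 + 1) := Real.log_nonneg (by nlinarith [sq_nonneg ‖x‖])
    simp only [Lf]
    linarith
  have hF0 : 0 < Ff (C₁ * (T - t) + A) (‖x‖ ^ 2) := Real.exp_pos _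
  have hHfnn : 0 ≤ Hf (C₁ * (T - t) + A) (‖x‖ ^ 2) := by
    simp only [Hf]
    apply div_nonneg _ (by positivity)
    exact mul_nonneg (mul_nonneg (by linarith) hF0.le) (by linarith)
  constructor
  · rw [(hasFDerivAt_chi T A C₁ t x).fderiv, chi_eq, psi_eq_s11,
      Real.sqrt_sq (by linarith : (0:ℝ) ≤ Lf (‖x‖ ^ 2))]
    refine le_trans (norm_smul_innerSL_le _ hHfnn x) ?_
    simp only [Hf]
    exact scalar_bound1 A (C₁ * (T - t) + A) ‖x‖ (Ff (C₁ * (T - t) + A) (‖x‖ ^ 2))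
      (Lf (‖x‖ ^ 2)) hA haA ha2A (norm_nonneg x) hL1 hF0
  · have hfe : (fun y : Vec n => fderiv ℝ (fun z : Vec n => chi T A C₁ t z) y)
        = fun y : Vec n => (Hf (C₁ * (T - t) + A) (‖y‖ ^ 2)) • innerSL ℝ y := by
      funext y; exact (hasFDerivAt_chi T A C₁ t y).fderiv
    rw [hfe]
    have hc : HasFDerivAt (fun y : Vec n => Hf (C₁ * (T - t) + A) (‖y‖ ^ 2))
        ((2 * (2 * (C₁ * (T - t) + A) * Ff (C₁ * (T - t) + A) (‖x‖ ^ 2)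
            * ((C₁ * (T - t) + A) * (Lf (‖x‖ ^ 2)) ^ 2 + 1 / 2 - Lf (‖x‖ ^ 2))
            / (‖x‖ ^ 2 + 1) ^ 2)) • innerSL ℝ x) x := by
      have h1 : HasFDerivAt (fun y : Vec n => ‖y‖ ^ 2) (2 • innerSL ℝ x) x :=
        (hasStrictFDerivAt_norm_sq x).hasFDerivAt
      have h2 := (hasDerivAt_Hf (a := C₁ * (T - t) + A)
        (by positivity : (0:ℝ) ≤ ‖x‖ ^ 2)).comp_hasFDerivAt x h1
      refine h2.congr_fderiv ?_
      ext y
      simp [ContinuousLinearMap.smul_apply, smul_eq_mul]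
      ring
    have hf' : HasFDerivAt (fun y : Vec n => innerSL ℝ y) (innerB n) x :=
      (innerB n).hasFDerivAt
    have hD := hc.smul hf'
    rw [HasFDerivAt.fderiv (f := fun y : Vec n => Hf (C₁ * (T - t) + A) (‖y‖ ^ 2) • innerSL ℝ y) hD]
    refine le_trans (norm_secondDeriv_le _ _ hHfnn x) ?_
    rw [chi_eq, psi_eq_s11]
    simp only [Hf]
    have hM : |(C₁ * (T - t) + A) * (Lf (‖x‖ ^ 2)) ^ 2 + 1 / 2 - Lf (‖x‖ ^ 2)|
        ≤ ((C₁ * (T - t) + A) + 3 / 2) * (Lf (‖x‖ ^ 2)) ^ 2 := by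
      rw [abs_le]
      constructor <;> nlinarith
    exact scalar_bound2 A (C₁ * (T - t) + A) ‖x‖ (Ff (C₁ * (T - t) + A) (‖x‖ ^ 2))
      (Lf (‖x‖ ^ 2)) _ hA haA ha2A (norm_nonneg x) hL1 hF0 hM

end
end

section
/- Increment estimates for χ, uniform in C₁ (used in the proof of Lemma 5.2): Let T > 0, Ã > 0, C₁ > 0 and M > 0, and set t₁ := max(T − Ã/C₁, 0). There exists a constant C > 0 depending only on Ã, M and the dimension n (in particular independent of C₁) such that for all t ∈ [t₁, T], all x ∈ ℝⁿ and all y ∈ ℝⁿ with |y| ≤ M: χ(t, x+y) − χ(t,x) − Dχ(t,x)·y ≤ C χ(t,x) (ψ(x)/(|x|²+1)) |y|², and χ(t, x+y) − χ(t,x) ≤ C χ(t,x) (ψ(x)^{1/2}/(|x|²+1)^{1/2}) |y|, where Dχ denotes the gradient of χ in the variable x. -/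
open Set

noncomputable section

namespace ChiAux
variable {n : ℕ}
def W (x y : Vec n) (s : ℝ) : ℝ := ‖x + s • y‖ ^ 2 + 1
def In (x y : Vec n) (s : ℝ) : ℝ := inner ℝ (x + s • y) y
def U (x y : Vec n) (s : ℝ) : ℝ := Real.log (W x y s) / 2 + 1
def FF (a : ℝ) (x y : Vec n) (s : ℝ) : ℝ := Real.exp (a * U x y s ^ 2)
def P (a : ℝ) (x y : Vec n) (s : ℝ) : ℝ := a * (2 * (U x y s * (In x y s / W x y s)))
def F1 (a : ℝ) (x y : Vec n) (s : ℝ) : ℝ := FF a x y s * P a x y s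
def P' (a : ℝ) (x y : Vec n) (s : ℝ) : ℝ :=
  a * (2 * (In x y s / W x y s * (In x y s / W x y s)
    + U x y s * ((‖y‖ ^ 2 * W x y s - In x y s * (2 * In x y s)) / W x y s ^ 2)))
def F2 (a : ℝ) (x y : Vec n) (s : ℝ) : ℝ :=
  F1 a x y s * P a x y s + FF a x y s * P' a x y s

lemma one_le_W (x y : Vec n) (s : ℝ) : 1 ≤ W x y s := by
  simp only [W]; nlinarith [sq_nonneg ‖x + s • y‖]
lemma W_pos (x y : Vec n) (s : ℝ) : 0 < W x y s := lt_of_lt_of_le one_pos (one_le_W x y s)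

lemma one_le_U (x y : Vec n) (s : ℝ) : 1 ≤ U x y s := by
  have := Real.log_nonneg (one_le_W x y s); simp only [U]; linarith

lemma sqrtW_pos (x y : Vec n) (s : ℝ) : 0 < Real.sqrt (W x y s) :=
  Real.sqrt_pos.2 (W_pos x y s)

lemma one_le_sqrtW (x y : Vec n) (s : ℝ) : 1 ≤ Real.sqrt (W x y s) := by
  rw [show (1:ℝ) = Real.sqrt 1 by simp]
  exact Real.sqrt_le_sqrt (one_le_W x y s)

lemma U_le_sqrtW (x y : Vec n) (s : ℝ) : U x y s ≤ Real.sqrt (W x y s) := by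
  have h1 : Real.log (Real.sqrt (W x y s)) ≤ Real.sqrt (W x y s) - 1 :=
    Real.log_le_sub_one_of_pos (sqrtW_pos x y s)
  have h2 : Real.log (Real.sqrt (W x y s)) = Real.log (W x y s) / 2 :=
    Real.log_sqrt (W_pos x y s).le
  simp only [U]; linarith

lemma sq_sqrtW (x y : Vec n) (s : ℝ) : Real.sqrt (W x y s) ^ 2 = W x y s :=
  Real.sq_sqrt (W_pos x y s).le

lemma In_sq_le (x y : Vec n) (s : ℝ) : In x y s ^ 2 ≤ W x y s * ‖y‖ ^ 2 := by
  have h := abs_real_inner_le_norm (x + s • y) y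
  have h2 : In x y s ^ 2 ≤ (‖x + s • y‖ * ‖y‖) ^ 2 := by
    rw [← sq_abs]
    exact pow_le_pow_left₀ (abs_nonneg _) h 2
  simp only [W]
  nlinarith [sq_nonneg ‖y‖]

lemma abs_In_le (x y : Vec n) (s : ℝ) : |In x y s| ≤ Real.sqrt (W x y s) * ‖y‖ := by
  have h := In_sq_le x y s
  have := Real.sqrt_le_sqrt h
  rwa [Real.sqrt_sq_eq_abs, Real.sqrt_mul (W_pos x y s).le, Real.sqrt_sq (norm_nonneg y)] at this

-- segment comparison
lemma W_comp {M : ℝ} (hM : 0 < M) (x y : Vec n) {s : ℝ} (hs : s ∈ Icc (0:ℝ) 1)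
    (hy : ‖y‖ ≤ M) : W x y 0 ≤ (2 + 2 * M ^ 2) * W x y s := by
  have hx : ‖x‖ ≤ ‖x + s • y‖ + M := by
    have h1 : ‖x‖ ≤ ‖x + s • y‖ + ‖s • y‖ := by
      have := norm_sub_le (x + s • y) (s • y)
      simpa using this
    have h2 : ‖s • y‖ ≤ M := by
      rw [norm_smul, Real.norm_eq_abs, abs_of_nonneg hs.1]
      calc s * ‖y‖ ≤ 1 * M := by
            apply mul_le_mul hs.2 hy (norm_nonneg y) zero_le_one
        _ = M := one_mul M
    linarith
  have h0 : W x y 0 = ‖x‖ ^ 2 + 1 := by simp [W]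
  rw [h0]
  simp only [W]
  have hx2 : ‖x‖ ^ 2 ≤ (‖x + s • y‖ + M) ^ 2 :=
    pow_le_pow_left₀ (norm_nonneg x) hx 2
  nlinarith [sq_nonneg (‖x + s • y‖ - M), sq_nonneg (‖x + s • y‖ * M), sq_nonneg ‖x + s • y‖, sq_nonneg M]


lemma hasDerivAt_W (x y : Vec n) (s : ℝ) : HasDerivAt (W x y) (2 * In x y s) s := by
  have h : HasDerivAt (fun s : ℝ => x + s • y) y s := by
    simpa using ((hasDerivAt_id s).smul_const y).const_add x
  exact (h.norm_sq).add_const 1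

lemma hasDerivAt_In (x y : Vec n) (s : ℝ) : HasDerivAt (In x y) (‖y‖ ^ 2) s := by
  have heq : In x y = fun s : ℝ => (inner ℝ x y : ℝ) + s * ‖y‖ ^ 2 := by
    funext s
    simp only [In, inner_add_left, real_inner_smul_left, real_inner_self_eq_norm_sq]
  rw [heq]
  simpa using ((hasDerivAt_id s).mul_const (‖y‖ ^ 2)).const_add (inner ℝ x y : ℝ)

lemma hasDerivAt_U (x y : Vec n) (s : ℝ) :
    HasDerivAt (U x y) (In x y s / W x y s) s := by
  have h := (((hasDerivAt_W x y s).log (W_pos x y s).ne').div_const 2).add_const 1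
  exact h.congr_deriv (by ring)

lemma FF_pos (a : ℝ) (x y : Vec n) (s : ℝ) : 0 < FF a x y s := Real.exp_pos _

lemma U_nonneg (x y : Vec n) (s : ℝ) : 0 ≤ U x y s := le_trans zero_le_one (one_le_U x y s)

lemma inv_sqrtW_comp {M : ℝ} (hM : 0 < M) (x y : Vec n) {s : ℝ} (hs : s ∈ Icc (0:ℝ) 1)
    (hy : ‖y‖ ≤ M) :
    1 / Real.sqrt (W x y s) ≤ Real.sqrt (2 + 2 * M ^ 2) / Real.sqrt (W x y 0) := by
  rw [div_le_div_iff₀ (sqrtW_pos x y s) (sqrtW_pos x y 0)]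
  have h := Real.sqrt_le_sqrt (W_comp hM x y hs hy)
  rw [Real.sqrt_mul (by positivity) (W x y s)] at h
  linarith

lemma inv_W_comp {M : ℝ} (hM : 0 < M) (x y : Vec n) {s : ℝ} (hs : s ∈ Icc (0:ℝ) 1)
    (hy : ‖y‖ ≤ M) :
    1 / W x y s ≤ (2 + 2 * M ^ 2) / W x y 0 := by
  rw [div_le_div_iff₀ (W_pos x y s) (W_pos x y 0)]
  have := W_comp hM x y hs hy
  linarith

lemma U_incr {M : ℝ} (hM : 0 < M) (x y : Vec n) {s : ℝ} (hs : s ∈ Icc (0:ℝ) 1)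
    (hy : ‖y‖ ≤ M) :
    U x y s ≤ U x y 0 + Real.sqrt (2 + 2 * M ^ 2) * M / Real.sqrt (W x y 0) := by
  set B := Real.sqrt (2 + 2 * M ^ 2) * M / Real.sqrt (W x y 0) with hB
  have hbound : ∀ σ ∈ Icc (0:ℝ) 1, ‖In x y σ / W x y σ‖ ≤ B := by
    intro σ hσ
    rw [Real.norm_eq_abs, abs_div, abs_of_pos (W_pos x y σ)]
    have h1 : |In x y σ| / W x y σ ≤ ‖y‖ / Real.sqrt (W x y σ) := by
      rw [div_le_div_iff₀ (W_pos x y σ) (sqrtW_pos x y σ)]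
      nlinarith [abs_In_le x y σ, sq_sqrtW x y σ, sqrtW_pos x y σ, norm_nonneg y,
        abs_nonneg (In x y σ)]
    have h2 : ‖y‖ / Real.sqrt (W x y σ) ≤ M / Real.sqrt (W x y σ) := by
      gcongr
    have h3 : M / Real.sqrt (W x y σ) ≤ B := by
        rw [hB, div_le_div_iff₀ (sqrtW_pos x y σ) (sqrtW_pos x y 0)]
        have h := Real.sqrt_le_sqrt (W_comp hM x y hσ hy)
        rw [Real.sqrt_mul (by positivity) (W x y σ)] at h
        nlinarith [sqrtW_pos x y σ, sqrtW_pos x y 0]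
    linarith
  have hmvt := Convex.norm_image_sub_le_of_norm_hasDerivWithin_le
    (f := U x y) (f' := fun σ => In x y σ / W x y σ) (s := Icc (0:ℝ) 1)
    (fun σ _ => (hasDerivAt_U x y σ).hasDerivWithinAt) hbound (convex_Icc 0 1)
    (left_mem_Icc.2 zero_le_one) hs
  have hB0 : 0 ≤ B := by positivity
  have : |U x y s - U x y 0| ≤ B := by
    have hs1 : ‖s - 0‖ ≤ 1 := by
      rw [Real.norm_eq_abs, sub_zero, abs_of_nonneg hs.1]; exact hs.2
    calc |U x y s - U x y 0| ≤ B * ‖s - 0‖ := hmvt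
      _ ≤ B * 1 := by nlinarith [norm_nonneg (s - 0)]
      _ = B := mul_one B
  have := abs_le.1 this
  linarith [this.2]

lemma U_comp {M : ℝ} (hM : 0 < M) (x y : Vec n) {s : ℝ} (hs : s ∈ Icc (0:ℝ) 1)
    (hy : ‖y‖ ≤ M) :
    U x y s ≤ (1 + Real.sqrt (2 + 2 * M ^ 2) * M) * U x y 0 := by
  have h1 := U_incr hM x y hs hy
  have h2 : Real.sqrt (2 + 2 * M ^ 2) * M / Real.sqrt (W x y 0)
      ≤ Real.sqrt (2 + 2 * M ^ 2) * M := by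
    apply div_le_self (by positivity) (one_le_sqrtW x y 0)
  have h3 := one_le_U x y 0
  nlinarith [mul_nonneg (by positivity : (0:ℝ) ≤ Real.sqrt (2 + 2 * M ^ 2) * M)
    (by linarith : (0:ℝ) ≤ U x y 0 - 1)]

lemma FF_comp {M A a : ℝ} (hM : 0 < M) (hA : 0 < A) (ha : 0 < a) (ha2 : a ≤ 2 * A)
    (x y : Vec n) {s : ℝ} (hs : s ∈ Icc (0:ℝ) 1) (hy : ‖y‖ ≤ M) :
    FF a x y s ≤ FF a x y 0 *
      Real.exp (2 * A * (2 * (Real.sqrt (2 + 2 * M ^ 2) * M)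
        + (Real.sqrt (2 + 2 * M ^ 2) * M) ^ 2)) := by
  set cM := Real.sqrt (2 + 2 * M ^ 2) with hcM
  set d := cM * M / Real.sqrt (W x y 0) with hd
  have hd0 : 0 ≤ d := by positivity
  have hdle : d ≤ cM * M := div_le_self (by positivity) (one_le_sqrtW x y 0)
  have hU := U_incr hM x y hs hy
  have hU0d : U x y 0 * d ≤ cM * M := by
    rw [hd]
    have h1 : U x y 0 ≤ Real.sqrt (W x y 0) := U_le_sqrtW x y 0
    rw [mul_div_assoc']
    rw [div_le_iff₀ (sqrtW_pos x y 0)]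
    nlinarith [U_nonneg x y 0, sqrtW_pos x y 0, (by positivity : (0:ℝ) ≤ cM * M)]
  have hK : U x y s ^ 2 ≤ U x y 0 ^ 2 + (2 * (cM * M) + (cM * M) ^ 2) := by
    nlinarith [U_nonneg x y s, U_nonneg x y 0]
  have hexp : a * U x y s ^ 2 ≤ a * U x y 0 ^ 2
      + 2 * A * (2 * (cM * M) + (cM * M) ^ 2) := by
    have hKnn : (0:ℝ) ≤ 2 * (cM * M) + (cM * M) ^ 2 := by positivity
    nlinarith
  calc FF a x y s = Real.exp (a * U x y s ^ 2) := rfl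
    _ ≤ Real.exp (a * U x y 0 ^ 2 + 2 * A * (2 * (cM * M) + (cM * M) ^ 2)) :=
        Real.exp_le_exp.2 hexp
    _ = FF a x y 0 * Real.exp (2 * A * (2 * (cM * M) + (cM * M) ^ 2)) := by
        rw [Real.exp_add]; rfl


lemma abs_P_le {a : ℝ} (ha : 0 ≤ a) (x y : Vec n) (s : ℝ) :
    |P a x y s| ≤ 2 * a * U x y s * ‖y‖ / Real.sqrt (W x y s) := by
  have hW := W_pos x y s
  have hsW := sqrtW_pos x y s
  have hPeq : P a x y s = 2 * a * U x y s * In x y s / W x y s := by unfold P; ring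
  have hUnn := U_nonneg x y s
  rw [hPeq, abs_div, abs_of_pos hW]
  have habs : |2 * a * U x y s * In x y s| = 2 * a * U x y s * |In x y s| := by
    rw [abs_mul, abs_of_nonneg (by positivity : (0:ℝ) ≤ 2 * a * U x y s)]
  rw [habs, div_le_div_iff₀ hW hsW]
  have key := mul_le_mul_of_nonneg_left (abs_In_le x y s)
    (by positivity : (0:ℝ) ≤ 2 * a * U x y s * Real.sqrt (W x y s))
  have hW' : Real.sqrt (W x y s) * Real.sqrt (W x y s) = W x y s := Real.mul_self_sqrt hW.le
  have key2 : 2 * a * U x y s * |In x y s| * Real.sqrt (W x y s)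
      ≤ 2 * a * U x y s * ‖y‖ * (Real.sqrt (W x y s) * Real.sqrt (W x y s)) := by
    nlinarith [key]
  rw [hW'] at key2
  exact key2

lemma abs_P'_le {a : ℝ} (ha : 0 ≤ a) (x y : Vec n) (s : ℝ) :
    |P' a x y s| ≤ 8 * a * U x y s ^ 2 * ‖y‖ ^ 2 / W x y s := by
  have hW := W_pos x y s
  have hU1 := one_le_U x y s
  have hUnn := U_nonneg x y s
  have hIn := In_sq_le x y s
  have hP'eq : P' a x y s
      = 2 * a * (In x y s ^ 2 + U x y s * (‖y‖ ^ 2 * W x y s - 2 * In x y s ^ 2))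
        / W x y s ^ 2 := by
    unfold P'; field_simp
  rw [hP'eq, abs_div, abs_of_pos (pow_pos hW 2)]
  have habs : |2 * a * (In x y s ^ 2 + U x y s * (‖y‖ ^ 2 * W x y s - 2 * In x y s ^ 2))|
      ≤ 2 * a * (4 * U x y s ^ 2 * W x y s * ‖y‖ ^ 2) := by
    rw [abs_mul, abs_of_nonneg (by positivity : (0:ℝ) ≤ 2 * a)]
    have hU2 : U x y s ≤ U x y s ^ 2 := by nlinarith
    have h4 : U x y s * (W x y s * ‖y‖ ^ 2) ≤ U x y s ^ 2 * (W x y s * ‖y‖ ^ 2) :=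
      mul_le_mul_of_nonneg_right hU2 (by positivity)
    have h5 : (1 : ℝ) * (W x y s * ‖y‖ ^ 2) ≤ U x y s ^ 2 * (W x y s * ‖y‖ ^ 2) :=
      mul_le_mul_of_nonneg_right (by nlinarith) (by positivity)
    have h1 : |In x y s ^ 2 + U x y s * (‖y‖ ^ 2 * W x y s - 2 * In x y s ^ 2)|
        ≤ 4 * U x y s ^ 2 * W x y s * ‖y‖ ^ 2 := by
      rw [abs_le]
      constructor
      · nlinarith [sq_nonneg (In x y s), sq_nonneg ‖y‖,
          mul_le_mul_of_nonneg_left hIn hUnn]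
      · nlinarith [sq_nonneg (In x y s), sq_nonneg ‖y‖,
          mul_le_mul_of_nonneg_left hIn hUnn, mul_nonneg hUnn (sq_nonneg ‖y‖)]
    nlinarith [abs_nonneg (In x y s ^ 2 + U x y s * (‖y‖ ^ 2 * W x y s - 2 * In x y s ^ 2))]
  calc |2 * a * (In x y s ^ 2 + U x y s * (‖y‖ ^ 2 * W x y s - 2 * In x y s ^ 2))| / W x y s ^ 2
      ≤ 2 * a * (4 * U x y s ^ 2 * W x y s * ‖y‖ ^ 2) / W x y s ^ 2 := by
        gcongr
    _ = 8 * a * U x y s ^ 2 * ‖y‖ ^ 2 / W x y s := by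
        field_simp; ring


lemma hasDerivAt_FF (a : ℝ) (x y : Vec n) (s : ℝ) :
    HasDerivAt (FF a x y) (F1 a x y s) s := by
  have h := ((((hasDerivAt_U x y s).pow 2).const_mul a).exp)
  refine h.congr_deriv ?_
  simp only [F1, FF, P, U, Pi.pow_apply]
  push_cast
  ring

lemma hasDerivAt_P (a : ℝ) (x y : Vec n) (s : ℝ) :
    HasDerivAt (P a x y) (P' a x y s) s := by
  have hdiv := (hasDerivAt_In x y s).div (hasDerivAt_W x y s) (W_pos x y s).ne'
  have h := (((hasDerivAt_U x y s).mul hdiv).const_mul 2).const_mul a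
  exact h

lemma hasDerivAt_F1 (a : ℝ) (x y : Vec n) (s : ℝ) :
    HasDerivAt (F1 a x y) (F2 a x y s) s :=
  (hasDerivAt_FF a x y s).mul (hasDerivAt_P a x y s)

lemma chi_eq_FF (T A C₁ t : ℝ) (x y : Vec n) (s : ℝ) :
    chi T A C₁ t (x + s • y) = FF (C₁ * (T - t) + A) x y s := by
  unfold chi psi FF U W
  rw [Real.log_sqrt (by positivity)]

lemma chi_eq_FF₀ (T A C₁ t : ℝ) (x y : Vec n) :
    chi T A C₁ t x = FF (C₁ * (T - t) + A) x y 0 := by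
  have h := chi_eq_FF T A C₁ t x y 0
  rwa [zero_smul, add_zero] at h

lemma chi_eq_FF₁ (T A C₁ t : ℝ) (x y : Vec n) :
    chi T A C₁ t (x + y) = FF (C₁ * (T - t) + A) x y 1 := by
  have h := chi_eq_FF T A C₁ t x y 1
  rwa [one_smul] at h

lemma fderiv_chi_apply (T A C₁ t : ℝ) (x y : Vec n) :
    fderiv ℝ (fun z : Vec n => chi T A C₁ t z) x y = F1 (C₁ * (T - t) + A) x y 0 := by
  set a := C₁ * (T - t) + A with ha_def
  have hv : (0:ℝ) < ‖x‖ ^ 2 + 1 := by positivity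
  have hlog := Real.hasDerivAt_log hv.ne'
  have houter := ((((hlog.div_const 2).add_const 1).pow 2).const_mul a).exp
  have hnorm : HasFDerivAt (fun z : Vec n => ‖z‖ ^ 2 + 1) ((2:ℕ) • (innerSL ℝ x)) x :=
    ((hasStrictFDerivAt_norm_sq x).hasFDerivAt).add_const 1
  have hcomp := houter.comp_hasFDerivAt x hnorm
  have hfun : (fun z : Vec n => chi T A C₁ t z)
      = (fun v : ℝ => Real.exp (a * (Real.log v / 2 + 1) ^ 2))
        ∘ (fun z : Vec n => ‖z‖ ^ 2 + 1) := by
    funext z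
    simp only [Function.comp_apply, chi, psi, ← ha_def]
    rw [Real.log_sqrt (by positivity)]
  rw [hfun, (show HasFDerivAt ((fun v : ℝ => Real.exp (a * (Real.log v / 2 + 1) ^ 2)) ∘ (fun z : Vec n => ‖z‖ ^ 2 + 1)) _ x from hcomp).fderiv]
  simp only [ContinuousLinearMap.smul_apply, ContinuousLinearMap.coe_smul', Pi.smul_apply,
    innerSL_apply_apply, smul_eq_mul, Pi.pow_apply, F1, FF, P, U, W, In, zero_smul, add_zero]
  have hW0 : (0:ℝ) < ‖x‖ ^ 2 + 1 := hv
  field_simp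
  ring

end ChiAux

lemma mul_le_mul₅ {a1 b1 c1 d1 e1 a2 b2 c2 d2 e2 : ℝ}
    (h1 : a1 ≤ a2) (h2 : b1 ≤ b2) (h3 : c1 ≤ c2) (h4 : d1 ≤ d2) (h5 : e1 ≤ e2)
    (pb : 0 ≤ b1) (pc : 0 ≤ c1) (pd : 0 ≤ d1) (pe : 0 ≤ e1)
    (qa : 0 ≤ a2) (qb : 0 ≤ b2) (qc : 0 ≤ c2) (qd : 0 ≤ d2) :
    a1 * b1 * c1 * d1 * e1 ≤ a2 * b2 * c2 * d2 * e2 := by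
  have s1 : a1 * b1 ≤ a2 * b2 := mul_le_mul h1 h2 pb qa
  have s2 : a1 * b1 * c1 ≤ a2 * b2 * c2 :=
    mul_le_mul s1 h3 pc (mul_nonneg qa qb)
  have s3 : a1 * b1 * c1 * d1 ≤ a2 * b2 * c2 * d2 :=
    mul_le_mul s2 h4 pd (mul_nonneg (mul_nonneg qa qb) qc)
  exact mul_le_mul s3 h5 pe (mul_nonneg (mul_nonneg (mul_nonneg qa qb) qc) qd)

set_option maxHeartbeats 1000000 in
open ChiAux in
/-- Increment estimates for `χ`, uniform in `C₁`: for all `Ã > 0` and `M > 0` there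
is `C > 0` (depending only on `Ã`, `M` and the dimension) such that for all `T > 0`,
`C₁ > 0`, `t ∈ [max(T − Ã/C₁, 0), T]`, `x ∈ ℝⁿ` and `|y| ≤ M`,
`χ(t,x+y) − χ(t,x) − Dχ(t,x)·y ≤ C χ(t,x) (ψ(x)/(|x|²+1)) |y|²` and
`χ(t,x+y) − χ(t,x) ≤ C χ(t,x) (ψ(x)^{1/2}/(|x|²+1)^{1/2}) |y|`. -/
theorem chi_increment_bounds (n : ℕ) :
    ∀ A M : ℝ, 0 < A → 0 < M → ∃ C : ℝ, 0 < C ∧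
      ∀ T : ℝ, 0 < T → ∀ C₁ : ℝ, 0 < C₁ →
        ∀ t ∈ Icc (max (T - A / C₁) 0) T, ∀ x y : Vec n, ‖y‖ ≤ M →
          chi T A C₁ t (x + y) - chi T A C₁ t x
              - fderiv ℝ (fun z : Vec n => chi T A C₁ t z) x y
            ≤ C * chi T A C₁ t x * (psi x / (‖x‖ ^ 2 + 1)) * ‖y‖ ^ 2 ∧
          chi T A C₁ t (x + y) - chi T A C₁ t x
            ≤ C * chi T A C₁ t x * (Real.sqrt (psi x) / Real.sqrt (‖x‖ ^ 2 + 1)) * ‖y‖ := by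
  intro A M hA hM
  set cM := Real.sqrt (2 + 2 * M ^ 2) with hcM_def
  set E := Real.exp (2 * A * (2 * (cM * M) + (cM * M) ^ 2)) with hE_def
  set CN := E * (16 * A ^ 2 + 16 * A) * (1 + cM * M) ^ 2 * (2 + 2 * M ^ 2) with hCN_def
  set CT := E * (4 * A) * (1 + cM * M) * cM with hCT_def
  have hcM : 0 < cM := Real.sqrt_pos.2 (by positivity)
  have hE : 0 < E := Real.exp_pos _
  have hκ : (0:ℝ) < 1 + cM * M := by positivity
  have hCN : 0 < CN := by
    apply mul_pos (mul_pos (mul_pos hE (by nlinarith)) (by positivity)) (by positivity)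
  have hCT : 0 < CT := mul_pos (mul_pos (mul_pos hE (by linarith)) hκ) hcM
  clear_value cM E CN CT
  refine ⟨CN + CT, by linarith, ?_⟩
  intro T hT C₁ hC₁ t ht x y hy
  set a := C₁ * (T - t) + A with ha_def
  have htT : t ≤ T := ht.2
  have ht1 : T - A / C₁ ≤ t := le_trans (le_max_left _ _) ht.1
  have haA : A ≤ a := by nlinarith [mul_nonneg hC₁.le (sub_nonneg.2 htT)]
  have ha2 : a ≤ 2 * A := by
    have h2 : C₁ * (T - t) ≤ A := by
      rw [mul_comm, ← le_div_iff₀ hC₁]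
      linarith
    linarith
  have ha : 0 < a := lt_of_lt_of_le hA haA
  have hFF0 : chi T A C₁ t x = FF a x y 0 := chi_eq_FF₀ T A C₁ t x y
  have hFF1 : chi T A C₁ t (x + y) = FF a x y 1 := chi_eq_FF₁ T A C₁ t x y
  have hfd : fderiv ℝ (fun z : Vec n => chi T A C₁ t z) x y = F1 a x y 0 :=
    fderiv_chi_apply T A C₁ t x y
  clear_value a
  have hpsi : psi x = U x y 0 ^ 2 := by
    simp only [psi, U, W, zero_smul, add_zero]
    rw [Real.log_sqrt (by positivity)]
  have hW0x : (‖x‖ : ℝ) ^ 2 + 1 = W x y 0 := by simp [W]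
  have hQ2 : (0:ℝ) ≤ FF a x y 0 * (U x y 0 ^ 2 / W x y 0) * ‖y‖ ^ 2 := by
    have h1 := (FF_pos a x y 0).le
    have h2 := (U_nonneg x y 0)
    have h3 := (W_pos x y 0).le
    positivity
  have hQ1 : (0:ℝ) ≤ FF a x y 0 * (U x y 0 / Real.sqrt (W x y 0)) * ‖y‖ := by
    have h1 := (FF_pos a x y 0).le
    have h2 := (U_nonneg x y 0)
    have h3 := (sqrtW_pos x y 0).le
    positivity
  -- bound on F1 over the segment
  have hbF1 : ∀ σ ∈ Icc (0:ℝ) 1, ‖F1 a x y σ‖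
      ≤ CT * (FF a x y 0 * (U x y 0 / Real.sqrt (W x y 0)) * ‖y‖) := by
    intro σ hσ
    have hFFσ := FF_pos a x y σ
    calc ‖F1 a x y σ‖ = FF a x y σ * |P a x y σ| := by
          simp only [F1, Real.norm_eq_abs, abs_mul, abs_of_pos hFFσ]
      _ ≤ FF a x y σ * (2 * a * U x y σ * ‖y‖ / Real.sqrt (W x y σ)) :=
          mul_le_mul_of_nonneg_left (abs_P_le ha.le x y σ) hFFσ.le
      _ = FF a x y σ * (2 * a) * U x y σ * ‖y‖ * (1 / Real.sqrt (W x y σ)) := by ring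
      _ ≤ (FF a x y 0 * E) * (2 * (2 * A)) * ((1 + cM * M) * U x y 0) * ‖y‖
            * (cM / Real.sqrt (W x y 0)) := by
          have hFFc := FF_comp hM hA ha ha2 x y hσ hy
          rw [← hcM_def, ← hE_def] at hFFc
          have hUc := U_comp hM x y hσ hy
          rw [← hcM_def] at hUc
          have hWc := inv_sqrtW_comp hM x y hσ hy
          rw [← hcM_def] at hWc
          refine mul_le_mul₅ hFFc (by linarith)
            hUc (le_refl ‖y‖) hWc
            (by linarith) (U_nonneg x y σ) (norm_nonneg y)
            (by positivity) ?_ (by linarith) ?_ (norm_nonneg y)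
          · exact mul_nonneg (FF_pos a x y 0).le hE.le
          · exact mul_nonneg hκ.le (U_nonneg x y 0)
      _ = CT * (FF a x y 0 * (U x y 0 / Real.sqrt (W x y 0)) * ‖y‖) := by
          rw [hCT_def]; ring
  -- bound on F2 over the segment
  have hbF2 : ∀ σ ∈ Icc (0:ℝ) 1, ‖F2 a x y σ‖
      ≤ CN * (FF a x y 0 * (U x y 0 ^ 2 / W x y 0) * ‖y‖ ^ 2) := by
    intro σ hσ
    have hFFσ := FF_pos a x y σ
    have hPσ := abs_P_le ha.le x y σ
    have hP'σ := abs_P'_le ha.le x y σ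
    have hWσ := W_pos x y σ
    have hsWσ := sqrtW_pos x y σ
    have hmul : Real.sqrt (W x y σ) * Real.sqrt (W x y σ) = W x y σ :=
      Real.mul_self_sqrt hWσ.le
    have hbnd : (0:ℝ) ≤ 2 * a * U x y σ * ‖y‖ / Real.sqrt (W x y σ) :=
      div_nonneg (mul_nonneg (mul_nonneg (by linarith) (U_nonneg x y σ)) (norm_nonneg y))
        hsWσ.le
    calc ‖F2 a x y σ‖ ≤ FF a x y σ * (|P a x y σ| * |P a x y σ|) + FF a x y σ * |P' a x y σ| := by
          simp only [F2, F1, Real.norm_eq_abs]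
          refine le_trans (abs_add_le _ _) ?_
          rw [abs_mul, abs_mul, abs_mul, abs_of_pos hFFσ]
          ring_nf
          exact le_refl _
      _ ≤ FF a x y σ * ((2 * a * U x y σ * ‖y‖ / Real.sqrt (W x y σ))
            * (2 * a * U x y σ * ‖y‖ / Real.sqrt (W x y σ)))
          + FF a x y σ * (8 * a * U x y σ ^ 2 * ‖y‖ ^ 2 / W x y σ) := by
          refine add_le_add (mul_le_mul_of_nonneg_left ?_ hFFσ.le)
            (mul_le_mul_of_nonneg_left hP'σ hFFσ.le)
          exact mul_le_mul hPσ hPσ (abs_nonneg _) hbnd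
      _ = FF a x y σ * (4 * a ^ 2 + 8 * a) * U x y σ ^ 2 * ‖y‖ ^ 2 * (1 / W x y σ) := by
          rw [div_mul_div_comm, hmul]
          field_simp
          ring
      _ ≤ (FF a x y 0 * E) * (16 * A ^ 2 + 16 * A) * ((1 + cM * M) ^ 2 * U x y 0 ^ 2)
            * ‖y‖ ^ 2 * ((2 + 2 * M ^ 2) / W x y 0) := by
          have hFFc := FF_comp hM hA ha ha2 x y hσ hy
          rw [← hcM_def, ← hE_def] at hFFc
          have hUc := U_comp hM x y hσ hy
          rw [← hcM_def] at hUc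
          refine mul_le_mul₅ hFFc (by nlinarith)
            ?_ (le_refl (‖y‖ ^ 2)) (inv_W_comp hM x y hσ hy)
            (by nlinarith) (sq_nonneg _) (sq_nonneg _) (by positivity)
            (mul_nonneg (FF_pos a x y 0).le hE.le) (by nlinarith)
            (mul_nonneg (sq_nonneg _) (sq_nonneg _)) (sq_nonneg _)
          calc U x y σ ^ 2 ≤ ((1 + cM * M) * U x y 0) ^ 2 :=
                pow_le_pow_left₀ (U_nonneg x y σ) hUc 2
            _ = (1 + cM * M) ^ 2 * U x y 0 ^ 2 := by ring
      _ = CN * (FF a x y 0 * (U x y 0 ^ 2 / W x y 0) * ‖y‖ ^ 2) := by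
          rw [hCN_def]; ring
  -- MVT for the first-order increment
  have key2 := Convex.norm_image_sub_le_of_norm_hasDerivWithin_le
    (f := FF a x y) (f' := F1 a x y) (s := Icc (0:ℝ) 1)
    (fun σ _ => (hasDerivAt_FF a x y σ).hasDerivWithinAt) hbF1 (convex_Icc 0 1)
    (left_mem_Icc.2 zero_le_one) (right_mem_Icc.2 zero_le_one)
  rw [show ‖(1:ℝ) - 0‖ = 1 by simp, mul_one] at key2
  -- MVT for the second-order (Taylor) increment
  have hstep : ∀ σ ∈ Icc (0:ℝ) 1, ‖F1 a x y σ - F1 a x y 0‖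
      ≤ CN * (FF a x y 0 * (U x y 0 ^ 2 / W x y 0) * ‖y‖ ^ 2) := by
    intro σ hσ
    have h := Convex.norm_image_sub_le_of_norm_hasDerivWithin_le
      (f := F1 a x y) (f' := F2 a x y) (s := Icc (0:ℝ) 1)
      (fun τ _ => (hasDerivAt_F1 a x y τ).hasDerivWithinAt) hbF2 (convex_Icc 0 1)
      (left_mem_Icc.2 zero_le_one) hσ
    have hσ1 : ‖σ - 0‖ ≤ 1 := by
      rw [Real.norm_eq_abs, sub_zero, abs_of_nonneg hσ.1]; exact hσ.2
    have hB2 : 0 ≤ CN * (FF a x y 0 * (U x y 0 ^ 2 / W x y 0) * ‖y‖ ^ 2) :=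
      mul_nonneg hCN.le hQ2
    calc ‖F1 a x y σ - F1 a x y 0‖
        ≤ CN * (FF a x y 0 * (U x y 0 ^ 2 / W x y 0) * ‖y‖ ^ 2) * ‖σ - 0‖ := h
      _ ≤ CN * (FF a x y 0 * (U x y 0 ^ 2 / W x y 0) * ‖y‖ ^ 2) * 1 :=
          mul_le_mul_of_nonneg_left hσ1 hB2
      _ = CN * (FF a x y 0 * (U x y 0 ^ 2 / W x y 0) * ‖y‖ ^ 2) := mul_one _
  have hG : ∀ σ ∈ Icc (0:ℝ) 1,
      HasDerivWithinAt (fun s : ℝ => FF a x y s - s * F1 a x y 0)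
        (F1 a x y σ - F1 a x y 0) (Icc (0:ℝ) 1) σ := by
    intro σ _
    have h := (hasDerivAt_FF a x y σ).sub ((hasDerivAt_id σ).mul_const (F1 a x y 0))
    simp only [one_mul] at h; exact h.hasDerivWithinAt
  have key1 := Convex.norm_image_sub_le_of_norm_hasDerivWithin_le hG hstep (convex_Icc 0 1)
    (left_mem_Icc.2 zero_le_one) (right_mem_Icc.2 zero_le_one)
  rw [show ‖(1:ℝ) - 0‖ = 1 by simp, mul_one] at key1
  simp only [one_mul, zero_mul, sub_zero] at key1
  constructor
  · rw [hFF1, hFF0, hfd, hpsi, hW0x]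
    have h1 : FF a x y 1 - FF a x y 0 - F1 a x y 0
        ≤ ‖FF a x y 1 - F1 a x y 0 - FF a x y 0‖ := by
      rw [Real.norm_eq_abs]
      exact le_trans (le_of_eq (by ring)) (le_abs_self _)
    calc FF a x y 1 - FF a x y 0 - F1 a x y 0
        ≤ CN * (FF a x y 0 * (U x y 0 ^ 2 / W x y 0) * ‖y‖ ^ 2) := le_trans h1 key1
      _ ≤ (CN + CT) * FF a x y 0 * (U x y 0 ^ 2 / W x y 0) * ‖y‖ ^ 2 := by
          nlinarith [hQ2, hCT]
  · rw [hFF1, hFF0, hpsi, hW0x, Real.sqrt_sq (U_nonneg x y 0)]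
    have h1 : FF a x y 1 - FF a x y 0 ≤ ‖FF a x y 1 - FF a x y 0‖ := by
      rw [Real.norm_eq_abs]; exact le_abs_self _
    calc FF a x y 1 - FF a x y 0
        ≤ CT * (FF a x y 0 * (U x y 0 / Real.sqrt (W x y 0)) * ‖y‖) := le_trans h1 key2
      _ ≤ (CN + CT) * FF a x y 0 * (U x y 0 / Real.sqrt (W x y 0)) * ‖y‖ := by
          nlinarith [hQ1, hCN]

end
end
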